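/- arXiv:2411.13233 — 3 statements merged into one kernel-verified Lean document; each statement's English description precedes it below -/
import Mathlib

section
/- Let x₀ and x₁ be points of E joined by a path u in E, and let ω₀ be a path in the fiber Y₀ = p⁻¹(p(x₀)) from x₀ to f(x₀) and ω₁ a path in the fiber Y₁ = p⁻¹(p(x₁)) from x₁ to f(x₁). Then the assignment which sends the class of [θ] ∈ π₁(Y₀, x₀) to the class of [H̃(1,·) ∗ ω₁⁻¹] ∈ π₁(Y₁, x₁), where H̃: I×I → E is any lift of the homotopy H(t,s) = p(u(t)) with H̃(t,0) = u(t), H̃(0,s) = (θ∗ω₀)(s) and H̃(t,1) = f(u(t)), is a well-defined bijection κ: R_B(f; x₀, ω₀) → R_B(f; x₁, ω₁). Moreover κ does not depend on the choice of the path u. -/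
open unitInterval

/-- The homotopy lifting property with respect to all spaces (Hurewicz fibration). -/
def IsHurewiczFibration {E B : Type} [TopologicalSpace E] [TopologicalSpace B]
    (p : C(E, B)) : Prop :=
  ∀ (X : Type) [TopologicalSpace X] (H : C(X × I, B)) (h₀ : C(X, E)),
    (∀ x, H (x, 0) = p (h₀ x)) →
      ∃ H' : C(X × I, E), (∀ x, H' (x, 0) = h₀ x) ∧ ∀ z, p (H' z) = H z

variable {E B : Type} [TopologicalSpace E] [TopologicalSpace B]

/-- Loops at `x₀` lying in the fiber of `p` through `x₀`; they represent elements of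
`π₁(Y, x₀)` where `Y = p⁻¹(p x₀)`. -/
def FiberLoop (p : C(E, B)) (x₀ : E) : Type :=
  {θ : Path x₀ x₀ // ∀ t, p (θ t) = p x₀}

/-- Two fiber loops `θ`, `θ'` are Reidemeister related over `B` (for the fiber map `g` and
base path `w` from `x₀` to `g x₀`) if there are a loop `c` in `E` at `x₀` and a lift `H` of
the homotopy `(t,s) ↦ p (c t)` with `H(t,0) = c(t)`, `H(0,s) = (θ∗w)(s)`, `H(t,1) = g(c(t))`
and `H(1,s) = (θ'∗w)(s)`. -/
def ReidemeisterRelB (p : C(E, B)) (g : C(E, E)) {x₀ : E} (w : Path x₀ (g x₀)) :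
    FiberLoop p x₀ → FiberLoop p x₀ → Prop := fun θ θ' =>
  ∃ (c : Path x₀ x₀) (H : C(I × I, E)),
    (∀ t, H (t, 0) = c t) ∧
    (∀ s, H (0, s) = (θ.1.trans w) s) ∧
    (∀ t, H (t, 1) = g (c t)) ∧
    (∀ s, H (1, s) = (θ'.1.trans w) s) ∧
    (∀ t s, p (H (t, s)) = p (c t))

/-- The set of Reidemeister classes over `B`. -/
def ReidemeisterSetB (p : C(E, B)) (g : C(E, E)) {x₀ : E} (w : Path x₀ (g x₀)) : Type :=
  Quot (ReidemeisterRelB p g w)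

/-- The `n`-th iterate of a continuous self-map, as a continuous map. -/
def iterC (f : C(E, E)) (n : ℕ) : C(E, E) := ⟨(⇑f)^[n], f.continuous.iterate n⟩

/-- The path `n(ω) = ω ∗ f(ω) ∗ ⋯ ∗ f^{n−1}(ω)` from `x₀` to `f^n(x₀)`. -/
noncomputable def nPath (f : C(E, E)) {x₀ : E} (ω : Path x₀ (f x₀)) : (n : ℕ) → Path x₀ ((⇑f)^[n] x₀)
  | 0 => Path.refl x₀
  | 1 => ω
  | (n + 2) => (nPath f ω (n + 1)).trans (ω.map (f.continuous.iterate (n + 1)))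

theorem fiber_iterate {p : C(E, B)} {f : C(E, E)} (hf : ∀ x, p (f x) = p x) :
    ∀ (k : ℕ) (x : E), p ((⇑f)^[k] x) = p x
  | 0, _ => rfl
  | (k + 1), x => by
      rw [Function.iterate_succ_apply, fiber_iterate hf k (f x), hf x]

theorem fiber_trans {p : C(E, B)} {x₀ a b c : E} {γ : Path a b} {δ : Path b c}
    (hγ : ∀ t, p (γ t) = p x₀) (hδ : ∀ t, p (δ t) = p x₀) :
    ∀ t, p ((γ.trans δ) t) = p x₀ := by
  intro t
  rw [Path.trans_apply]
  split_ifs <;> first | exact hγ _ | exact hδ _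

theorem fiber_symm {p : C(E, B)} {x₀ a b : E} {γ : Path a b}
    (hγ : ∀ t, p (γ t) = p x₀) : ∀ t, p (γ.symm t) = p x₀ := fun _ => hγ _

theorem fiber_map {p : C(E, B)} {f : C(E, E)} (hf : ∀ x, p (f x) = p x) {x₀ a b : E}
    {γ : Path a b} (hγ : ∀ t, p (γ t) = p x₀) (k : ℕ) :
    ∀ t, p ((γ.map (f.continuous.iterate k)) t) = p x₀ := fun t => by
  show p ((⇑f)^[k] (γ t)) = p x₀
  rw [fiber_iterate hf k, hγ]

theorem fiber_nPath {p : C(E, B)} {f : C(E, E)} (hf : ∀ x, p (f x) = p x) {x₀ : E}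
    {ω : Path x₀ (f x₀)} (hω : ∀ t, p (ω t) = p x₀) :
    ∀ (n : ℕ) (t : I), p (nPath f ω n t) = p x₀
  | 0, _ => rfl
  | 1, t => hω t
  | (n + 2), t => by
      simp only [nPath]
      exact fiber_trans (fiber_nPath hf hω (n + 1)) (fiber_map hf hω (n + 1)) t

/-- The loop `f^{kω}(θ) = k(ω) ∗ f^k(θ) ∗ k(ω)⁻¹` at `x₀`. -/
noncomputable def fpowLoop (f : C(E, E)) {x₀ : E} (ω : Path x₀ (f x₀)) (k : ℕ) (θ : Path x₀ x₀) :
    Path x₀ x₀ :=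
  ((nPath f ω k).trans (θ.map (f.continuous.iterate k))).trans (nPath f ω k).symm

/-- `f^{kω}` applied to a fiber loop is again a fiber loop. -/
noncomputable def fpowFiberLoop (p : C(E, B)) (f : C(E, E)) (hf : ∀ x, p (f x) = p x) {x₀ : E}
    (ω : Path x₀ (f x₀)) (hω : ∀ t, p (ω t) = p x₀) (k : ℕ) (θ : FiberLoop p x₀) :
    FiberLoop p x₀ :=
  ⟨fpowLoop f ω k θ.1,
    fiber_trans (fiber_trans (fiber_nPath hf hω k) (fiber_map hf θ.2 k))
      (fiber_symm (fiber_nPath hf hω k))⟩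

/-- Auxiliary product `f^{0·mω}(θ) ∗ f^{1·mω}(θ) ∗ ⋯ ∗ f^{(j−1)·mω}(θ)`. -/
noncomputable def gammaAux (f : C(E, E)) {x₀ : E} (ω : Path x₀ (f x₀)) (m : ℕ) (θ : Path x₀ x₀) :
    ℕ → Path x₀ x₀
  | 0 => Path.refl x₀
  | (j + 1) => (gammaAux f ω m θ j).trans (fpowLoop f ω (j * m) θ)

/-- The loop `γ_{m,n}(θ) = θ ∗ f^{mω}(θ) ∗ f^{2mω}(θ) ∗ ⋯ ∗ f^{(n−m)ω}(θ)`. -/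
noncomputable def gammaLoop (f : C(E, E)) {x₀ : E} (ω : Path x₀ (f x₀)) (m n : ℕ) (θ : Path x₀ x₀) :
    Path x₀ x₀ :=
  gammaAux f ω m θ (n / m)

theorem fiber_gammaAux {p : C(E, B)} {f : C(E, E)} (hf : ∀ x, p (f x) = p x) {x₀ : E}
    {ω : Path x₀ (f x₀)} (hω : ∀ t, p (ω t) = p x₀) (m : ℕ) (θ : FiberLoop p x₀) :
    ∀ (j : ℕ) (t : I), p (gammaAux f ω m θ.1 j t) = p x₀
  | 0, _ => rfl
  | (j + 1), t => by
    simp only [gammaAux]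
    exact fiber_trans (fiber_gammaAux hf hω m θ j)
      (fpowFiberLoop p f hf ω hω (j * m) θ).2 t

/-- `γ_{m,n}` applied to a fiber loop is again a fiber loop. -/
noncomputable def gammaFiberLoop (p : C(E, B)) (f : C(E, E)) (hf : ∀ x, p (f x) = p x) {x₀ : E}
    (ω : Path x₀ (f x₀)) (hω : ∀ t, p (ω t) = p x₀) (m n : ℕ) (θ : FiberLoop p x₀) :
    FiberLoop p x₀ :=
  ⟨gammaLoop f ω m n θ.1, fiber_gammaAux hf hω m θ (n / m)⟩

/-- `F` realizes the induced function `[f^ω]` on the Reidemeister classes of `f^n` over `B`. -/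
def IsFOmegaMap (p : C(E, B)) (f : C(E, E)) (hf : ∀ x, p (f x) = p x) {x₀ : E}
    (ω : Path x₀ (f x₀)) (hω : ∀ t, p (ω t) = p x₀) (n : ℕ)
    (F : ReidemeisterSetB p (iterC f n) (nPath f ω n) →
      ReidemeisterSetB p (iterC f n) (nPath f ω n)) : Prop :=
  ∀ θ : FiberLoop p x₀,
    F (Quot.mk _ θ) = Quot.mk _ (fpowFiberLoop p f hf ω hω 1 θ)

/-- `G` realizes the induced function `[γ_{m,n}]` from the Reidemeister classes of `f^m`
to those of `f^n` over `B`. -/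
def IsGammaMap (p : C(E, B)) (f : C(E, E)) (hf : ∀ x, p (f x) = p x) {x₀ : E}
    (ω : Path x₀ (f x₀)) (hω : ∀ t, p (ω t) = p x₀) (m n : ℕ)
    (G : ReidemeisterSetB p (iterC f m) (nPath f ω m) →
      ReidemeisterSetB p (iterC f n) (nPath f ω n)) : Prop :=
  ∀ θ : FiberLoop p x₀,
    G (Quot.mk _ θ) = Quot.mk _ (gammaFiberLoop p f hf ω hω m n θ)

/-- Fixed points of a continuous self-map. -/
def FixPt (g : C(E, E)) : Type := {x : E // g x = x}

/-- Nielsen equivalence over `B` of fixed points of `g`. -/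
def NielsenRelB (p : C(E, B)) (g : C(E, E)) : FixPt g → FixPt g → Prop := fun x y =>
  ∃ (lam : Path x.1 y.1) (H : C(I × I, E)),
    (∀ t, H (t, 0) = lam t) ∧
    (∀ t, H (t, 1) = g (lam t)) ∧
    (∀ s, H (0, s) = x.1) ∧
    (∀ s, H (1, s) = y.1) ∧
    (∀ t s, p (H (t, s)) = p (lam t))

/-- The set of Nielsen classes over `B`. -/
def NielsenSetB (p : C(E, B)) (g : C(E, E)) : Type := Quot (NielsenRelB p g)

/-- The space `E_B(g) = {(x, α) : p∘α const, α(0) = x, α(1) = g(x)}` with the topology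
induced from `E × C(I, E)` (compact-open topology on paths). -/
def EBSpace (p : C(E, B)) (g : C(E, E)) : Type :=
  {z : E × C(I, E) // (∀ t, p (z.2 t) = p z.1) ∧ z.2 0 = z.1 ∧ z.2 1 = g z.1}

instance (p : C(E, B)) (g : C(E, E)) : TopologicalSpace (EBSpace p g) :=
  instTopologicalSpaceSubtype

/-- Path components of a space. -/
def Pi0 (X : Type) [TopologicalSpace X] : Type := Quot (@Joined X _)

/-- The map `g_B : Fix(g) → E_B(g)`, `x ↦ (x, constant path at x)`. -/
def gBMap (p : C(E, B)) (g : C(E, E)) (x : FixPt g) : EBSpace p g :=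
  ⟨(x.1, ContinuousMap.const I x.1), fun _ => rfl, rfl, x.2.symm⟩

instance (g : C(E, E)) : TopologicalSpace (FixPt g) := instTopologicalSpaceSubtype

/-- The Reidemeister class over `B` of a fiber loop. -/
def rClass (p : C(E, B)) (g : C(E, E)) {x₀ : E} (w : Path x₀ (g x₀)) (θ : FiberLoop p x₀) :
    ReidemeisterSetB p g w := Quot.mk _ θ

/-- The Nielsen class over `B` of a fixed point. -/
def nClass (p : C(E, B)) {g : C(E, E)} (x : FixPt g) : NielsenSetB p g := Quot.mk _ x

/-- The path component of a point. -/
def piComp {X : Type} [TopologicalSpace X] (x : X) : Pi0 X := Quot.mk _ x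

/-- A Reidemeister class of `f^n` over `B` is reducible to `m` if it lies in the image of
the induced function `[γ_{m,n}]`. -/
def ReducibleTo (p : C(E, B)) (f : C(E, E)) (hf : ∀ x, p (f x) = p x) {x₀ : E}
    (ω : Path x₀ (f x₀)) (hω : ∀ t, p (ω t) = p x₀) (n m : ℕ)
    (a : ReidemeisterSetB p (iterC f n) (nPath f ω n)) : Prop :=
  ∃ G : ReidemeisterSetB p (iterC f m) (nPath f ω m) →
      ReidemeisterSetB p (iterC f n) (nPath f ω n),
    IsGammaMap p f hf ω hω m n G ∧ a ∈ Set.range G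

namespace RBAux

variable {E B : Type} [TopologicalSpace E] [TopologicalSpace B]

theorem fiber_trans' {p : C(E, B)} {x₀ a b c : E} {γ : Path a b} {δ : Path b c}
    (hγ : ∀ t, p (γ t) = p x₀) (hδ : ∀ t, p (δ t) = p x₀) :
    ∀ t, p ((γ.trans δ) t) = p x₀ := by
  intro t
  rw [Path.trans_apply]
  split_ifs <;> first | exact hγ _ | exact hδ _

/-- clamp a real into the unit interval -/
noncomputable abbrev pj (r : ℝ) : I := Set.projIcc 0 1 zero_le_one r

lemma pj_coe (t : I) : pj (t : ℝ) = t := Set.projIcc_val zero_le_one t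

lemma pj_of_mem {r : ℝ} (h0 : 0 ≤ r) (h1 : r ≤ 1) : pj r = ⟨r, h0, h1⟩ :=
  Set.projIcc_of_mem _ ⟨h0, h1⟩

lemma continuous_pj : Continuous pj := continuous_projIcc

lemma pj_zero : pj 0 = 0 := by rw [pj_of_mem le_rfl zero_le_one]; rfl

lemma pj_one : pj 1 = 1 := by rw [pj_of_mem zero_le_one le_rfl]; rfl

/-- horizontal concatenation of two squares -/
noncomputable def transSq (A A' : C(I × I, E)) (hAA : ∀ s, A (1, s) = A' (0, s)) :
    C(I × I, E) where
  toFun z := if (z.1 : ℝ) ≤ 1 / 2 then A (pj (2 * z.1), z.2) else A' (pj (2 * z.1 - 1), z.2)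
  continuous_toFun := by
    apply Continuous.if_le
    · exact A.continuous.comp ((continuous_pj.comp (by fun_prop)).prodMk continuous_snd)
    · exact A'.continuous.comp ((continuous_pj.comp (by fun_prop)).prodMk continuous_snd)
    · fun_prop
    · exact continuous_const
    · intro z hz
      rw [hz]
      norm_num
      exact hAA z.2

lemma transSq_apply (A A' : C(I × I, E)) (hAA) (t s : I) :
    transSq A A' hAA (t, s) = if h : (t : ℝ) ≤ 1 / 2
      then A (⟨2 * t, (mul_pos_mem_iff zero_lt_two).2 ⟨t.2.1, h⟩⟩, s)
      else A' (⟨2 * t - 1, two_mul_sub_one_mem_iff.2 ⟨(not_le.1 h).le, t.2.2⟩⟩, s) := by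
  show ite _ _ _ = _
  split_ifs with h
  · show A (pj (2 * (t:ℝ)), s) = _
    rw [pj_of_mem (mul_nonneg zero_le_two t.2.1) (by dsimp only at h; linarith)]
  · show A' (pj (2 * (t:ℝ) - 1), s) = _
    dsimp only at h
    rw [pj_of_mem (by linarith) (by linarith [t.2.2])]

lemma transSq_left (A A' : C(I × I, E)) (hAA) (s : I) :
    transSq A A' hAA (0, s) = A (0, s) := by
  rw [transSq_apply]
  norm_num

lemma transSq_right (A A' : C(I × I, E)) (hAA) (s : I) :
    transSq A A' hAA (1, s) = A' (1, s) := by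
  rw [transSq_apply]
  norm_num

lemma transSq_row {X : Type} [TopologicalSpace X] (A A' : C(I × I, E)) (hAA)
    {a b c : X} (pa : Path a b) (pb : Path b c) (s : I) (k : X → E)
    (hA : ∀ t, A (t, s) = k (pa t)) (hA' : ∀ t, A' (t, s) = k (pb t)) (t : I) :
    transSq A A' hAA (t, s) = k ((pa.trans pb) t) := by
  rw [transSq_apply, Path.trans_apply]
  split_ifs with h
  · exact hA _
  · exact hA' _

lemma transSq_p (p : C(E, B)) (A A' : C(I × I, E)) (hAA)
    {a b c : E} (pa : Path a b) (pb : Path b c)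
    (hA : ∀ t s, p (A (t, s)) = p (pa t)) (hA' : ∀ t s, p (A' (t, s)) = p (pb t)) (t s : I) :
    p (transSq A A' hAA (t, s)) = p ((pa.trans pb) t) := by
  rw [transSq_apply, Path.trans_apply]
  split_ifs with h
  · exact hA _ _
  · exact hA' _ _

/-- vertical concatenation of two squares -/
noncomputable def vtransSq (A A' : C(I × I, E)) (hAA : ∀ t, A (t, 1) = A' (t, 0)) :
    C(I × I, E) where
  toFun z := if (z.2 : ℝ) ≤ 1 / 2 then A (z.1, pj (2 * z.2)) else A' (z.1, pj (2 * z.2 - 1))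
  continuous_toFun := by
    apply Continuous.if_le
    · exact A.continuous.comp (continuous_fst.prodMk (continuous_pj.comp (by fun_prop)))
    · exact A'.continuous.comp (continuous_fst.prodMk (continuous_pj.comp (by fun_prop)))
    · fun_prop
    · exact continuous_const
    · intro z hz
      rw [hz]
      norm_num
      exact hAA z.1

lemma vtransSq_apply (A A' : C(I × I, E)) (hAA) (t s : I) :
    vtransSq A A' hAA (t, s) = if h : (s : ℝ) ≤ 1 / 2
      then A (t, ⟨2 * s, (mul_pos_mem_iff zero_lt_two).2 ⟨s.2.1, h⟩⟩)
      else A' (t, ⟨2 * s - 1, two_mul_sub_one_mem_iff.2 ⟨(not_le.1 h).le, s.2.2⟩⟩) := by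
  show ite _ _ _ = _
  split_ifs with h
  · show A (t, pj (2 * (s:ℝ))) = _
    rw [pj_of_mem (mul_nonneg zero_le_two s.2.1) (by dsimp only at h; linarith)]
  · show A' (t, pj (2 * (s:ℝ) - 1)) = _
    dsimp only at h
    rw [pj_of_mem (by linarith) (by linarith [s.2.2])]

lemma vtransSq_bot (A A' : C(I × I, E)) (hAA) (t : I) :
    vtransSq A A' hAA (t, 0) = A (t, 0) := by
  rw [vtransSq_apply]
  norm_num

lemma vtransSq_top (A A' : C(I × I, E)) (hAA) (t : I) :
    vtransSq A A' hAA (t, 1) = A' (t, 1) := by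
  rw [vtransSq_apply]
  norm_num

/-! ### the lifting function -/

variable {p : C(E, B)}

/-- The domain of the path-lifting function. -/
abbrev LX (p : C(E, B)) : Type := {z : E × C(I, B) // z.2 0 = p z.1}

def IsHF (p : C(E, B)) : Prop :=
  ∀ (X : Type) [TopologicalSpace X] (H : C(X × I, B)) (h₀ : C(X, E)),
    (∀ x, H (x, 0) = p (h₀ x)) →
      ∃ H' : C(X × I, E), (∀ x, H' (x, 0) = h₀ x) ∧ ∀ z, p (H' z) = H z

lemma exists_liftFun (hp : IsHF p) :
    ∃ Λ : C(LX p × I, E), (∀ z, Λ (z, 0) = z.1.1) ∧ ∀ z t, p (Λ (z, t)) = z.1.2 t := by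
  obtain ⟨Λ, h0, hl⟩ := hp (LX p)
    ⟨fun q => q.1.1.2 q.2, by
      have : Continuous fun q : LX p × I => ((q.1.1.2 : C(I, B)), q.2) := by fun_prop
      exact (ContinuousEval.continuous_eval (F := C(I, B)) (X := I) (Y := B)).comp this⟩
    ⟨fun z => z.1.1, by fun_prop⟩
    (fun z => z.2)
  exact ⟨Λ, h0, fun z t => hl (z, t)⟩

/-! ### vertical connection of two lifts with the same start -/

lemma vertConn (Λ : C(LX p × I, E)) (hΛ0 : ∀ z, Λ (z, 0) = z.1.1)
    (hΛp : ∀ z t, p (Λ (z, t)) = z.1.2 t)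
    (w : C(I, B)) (a b : C(I, E)) (ha : ∀ t, p (a t) = w t) (hb : ∀ t, p (b t) = w t)
    (h0 : a 0 = b 0) :
    ∃ K : C(I × I, E), (∀ t, K (t, 0) = a t) ∧ (∀ t, K (t, 1) = b t) ∧
      (∀ s, K (0, s) = a 0) ∧ (∀ t s, p (K (t, s)) = w t) := by
  classical
  -- the restarted base paths
  set V : C(I × I, B) := ⟨fun q => w (pj ((q.1 : ℝ) + q.2)), by
    exact w.continuous.comp (continuous_pj.comp (by fun_prop))⟩ with hV
  have hV0 : ∀ (ℓ : C(I, E)), (∀ t, p (ℓ t) = w t) → ∀ sg : I, (V.curry sg) 0 = p (ℓ sg) := by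
    intro ℓ hℓ sg
    show w (pj ((sg : ℝ) + (0 : I))) = p (ℓ sg)
    rw [show ((0 : I) : ℝ) = 0 from rfl, add_zero, pj_coe, hℓ]
  -- the deformation
  have mkD : ∀ (ℓ : C(I, E)) (hℓ : ∀ t, p (ℓ t) = w t),
      ∃ D : C(I × I, E),
        (∀ z : I × I, D z = if (z.2 : ℝ) ≤ (z.1 : ℝ) then ℓ z.2
          else Λ (⟨⟨(ℓ z.1, V.curry z.1), (hV0 ℓ hℓ z.1)⟩, pj ((z.2 : ℝ) - z.1)⟩)) := by
    intro ℓ hℓ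
    refine ⟨⟨fun z => if (z.2 : ℝ) ≤ (z.1 : ℝ) then ℓ z.2
      else Λ (⟨⟨(ℓ z.1, V.curry z.1), (hV0 ℓ hℓ z.1)⟩, pj ((z.2 : ℝ) - z.1)⟩), ?_⟩,
      fun z => rfl⟩
    apply Continuous.if_le
    · exact ℓ.continuous.comp continuous_snd
    · apply Λ.continuous.comp
      apply Continuous.prodMk
      · apply Continuous.subtype_mk
        exact (ℓ.continuous.comp continuous_fst).prodMk
          (V.curry.continuous.comp continuous_fst)
      · exact continuous_pj.comp (by fun_prop)
    · fun_prop
    · fun_prop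
    · intro z hz
      have hzz : z.2 = z.1 := Subtype.ext hz
      rw [hz, sub_self, pj_zero, hΛ0]
      show ℓ z.2 = ℓ z.1
      rw [hzz]
  obtain ⟨Da, hDa⟩ := mkD a ha
  obtain ⟨Db, hDb⟩ := mkD b hb
  -- properties of D
  have Dprop : ∀ (ℓ : C(I, E)) (hℓ : ∀ t, p (ℓ t) = w t) (D : C(I × I, E)),
      (∀ z : I × I, D z = if (z.2 : ℝ) ≤ (z.1 : ℝ) then ℓ z.2
        else Λ (⟨⟨(ℓ z.1, V.curry z.1), (hV0 ℓ hℓ z.1)⟩, pj ((z.2 : ℝ) - z.1)⟩)) →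
      (∀ t, D (1, t) = ℓ t) ∧ (∀ sg, D (sg, 0) = ℓ 0) ∧ (∀ z : I × I, p (D z) = w z.2) := by
    intro ℓ hℓ D hD
    refine ⟨fun t => by rw [hD]; simp [t.2.2], fun sg => by rw [hD]; simp [sg.2.1], fun z => by
      rw [hD]
      split_ifs with h
      · exact hℓ _
      · rw [hΛp]
        show w (pj ((z.1 : ℝ) + (pj ((z.2 : ℝ) - z.1) : ℝ))) = w z.2
        push_neg at h
        have hmem := pj_of_mem (r := (z.2 : ℝ) - (z.1 : ℝ)) (by linarith)
          (by linarith [z.2.2.2, z.1.2.1])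
        rw [hmem]
        show w (pj ((z.1 : ℝ) + ((z.2 : ℝ) - z.1))) = w z.2
        rw [show (z.1 : ℝ) + ((z.2 : ℝ) - z.1) = z.2 by ring, pj_coe]⟩
  obtain ⟨haT, haL, haP⟩ := Dprop a ha Da hDa
  obtain ⟨hbT, hbL, hbP⟩ := Dprop b hb Db hDb
  -- D at σ = 0 agree
  have hzero : ∀ t, Da (0, t) = Db (0, t) := by
    intro t
    rw [hDa, hDb]
    split_ifs with h
    · have : t = 0 := Subtype.ext (le_antisymm h t.2.1)
      rw [this, show a 0 = b 0 from h0]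
    · simp only [h0]
  refine ⟨⟨fun z => if (z.2 : ℝ) ≤ 1 / 2 then Da (pj (1 - 2 * z.2), z.1)
      else Db (pj (2 * z.2 - 1), z.1), ?_⟩, ?_, ?_, ?_, ?_⟩
  · apply Continuous.if_le
    · exact Da.continuous.comp ((continuous_pj.comp (by fun_prop)).prodMk continuous_fst)
    · exact Db.continuous.comp ((continuous_pj.comp (by fun_prop)).prodMk continuous_fst)
    · fun_prop
    · fun_prop
    · intro z hz
      rw [hz]
      norm_num
      exact hzero z.1
  · intro t
    show ite _ _ _ = _
    norm_num
    exact haT t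
  · intro t
    show ite _ _ _ = _
    norm_num
    exact hbT t
  · intro s
    show ite _ _ _ = _
    split_ifs with h
    · exact haL _
    · rw [hbL]
      exact h0.symm
  · intro t s
    show p (ite _ _ _) = _
    split_ifs with h
    · exact haP _
    · exact hbP _

/-! ### the relation between fiber loops at different basepoints -/

/-- local copy of FiberLoop -/
abbrev FLoop (p : C(E, B)) (x : E) : Type := {θ : Path x x // ∀ t, p (θ t) = p x}

/-- local copy of ReidemeisterRelB -/
def RRel (p : C(E, B)) (f : C(E, E)) {x : E} (w : Path x (f x)) :
    FLoop p x → FLoop p x → Prop := fun θ θ' =>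
  ∃ (c : Path x x) (H : C(I × I, E)),
    (∀ t, H (t, 0) = c t) ∧
    (∀ s, H (0, s) = (θ.1.trans w) s) ∧
    (∀ t, H (t, 1) = f (c t)) ∧
    (∀ s, H (1, s) = (θ'.1.trans w) s) ∧
    (∀ t s, p (H (t, s)) = p (c t))

/-- `θ` at `x` is carried to `γ` at `y` by a lifted homotopy over some path `u`. -/
def Srel (p : C(E, B)) (f : C(E, E)) {x y : E} (ωx : Path x (f x)) (ωy : Path y (f y))
    (θ : FLoop p x) (γ : FLoop p y) : Prop :=
  ∃ (u : Path x y) (H : C(I × I, E)),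
    (∀ t, H (t, 0) = u t) ∧
    (∀ s, H (0, s) = (θ.1.trans ωx) s) ∧
    (∀ t, H (t, 1) = f (u t)) ∧
    (∀ s, H (1, s) = (γ.1.trans ωy) s) ∧
    (∀ t s, p (H (t, s)) = p (u t))

lemma RRel_refl {p : C(E, B)} {f : C(E, E)} {x : E} {w : Path x (f x)}
    (hw : ∀ t, p (w t) = p x) (θ : FLoop p x) : RRel p f w θ θ := by
  refine ⟨Path.refl x, ⟨fun z => (θ.1.trans w) z.2, by fun_prop⟩, ?_, ?_, ?_, ?_, ?_⟩
  · intro t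
    show (θ.1.trans w) 0 = _
    rw [Path.source]
    rfl
  · intro s; rfl
  · intro t
    show (θ.1.trans w) 1 = _
    rw [Path.target]
    rfl
  · intro s; rfl
  · intro t s
    exact fiber_trans' (p := p) (x₀ := x) θ.2 hw s

lemma Srel_symm {p : C(E, B)} {f : C(E, E)} {x y : E} {ωx : Path x (f x)} {ωy : Path y (f y)}
    {θ : FLoop p x} {γ : FLoop p y} (h : Srel p f ωx ωy θ γ) : Srel p f ωy ωx γ θ := by
  obtain ⟨u, H, h1, h2, h3, h4, h5⟩ := h
  refine ⟨u.symm, ⟨fun z => H (σ z.1, z.2), by fun_prop⟩, ?_, ?_, ?_, ?_, ?_⟩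
  · intro t; exact h1 (σ t)
  · intro s
    show H (σ 0, s) = _
    rw [show σ (0 : I) = 1 from unitInterval.symm_zero]; exact h4 s
  · intro t; exact h3 (σ t)
  · intro s
    show H (σ 1, s) = _
    rw [show σ (1 : I) = 0 from unitInterval.symm_one]; exact h2 s
  · intro t s; exact h5 (σ t) s

/-- the main gluing lemma -/
lemma glue {p : C(E, B)} {f : C(E, E)} {x y : E} {ωx : Path x (f x)} {ωy : Path y (f y)}
    {θ θ' : FLoop p x} {γ γ' : FLoop p y} (hR : RRel p f ωx θ θ')
    (hS : Srel p f ωx ωy θ γ) (hS' : Srel p f ωx ωy θ' γ') : RRel p f ωy γ γ' := by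
  obtain ⟨c, K, k1, k2, k3, k4, k5⟩ := hR
  obtain ⟨u, H, h1, h2, h3, h4, h5⟩ := hS
  obtain ⟨u', H', g1, g2, g3, g4, g5⟩ := hS'
  set Hrev : C(I × I, E) := ⟨fun z => H (σ z.1, z.2), by fun_prop⟩ with hHrev
  have hbd1 : ∀ s, K (1, s) = H' (0, s) := fun s => by rw [k4, g2]
  have hbd2 : ∀ s, Hrev (1, s) = (transSq K H' hbd1) (0, s) := fun s => by
    rw [transSq_left]
    show H (σ 1, s) = _
    rw [show σ (1 : I) = 0 from unitInterval.symm_one, h2, k2]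
  refine ⟨u.symm.trans (c.trans u'), transSq Hrev (transSq K H' hbd1) hbd2, ?_, ?_, ?_, ?_, ?_⟩
  · intro t
    refine transSq_row _ _ _ u.symm (c.trans u') 0 id ?_ ?_ t
    · intro t'; show H (σ t', 0) = u (σ t'); exact h1 (σ t')
    · intro t'
      refine transSq_row _ _ _ c u' 0 id ?_ ?_ t'
      · exact k1
      · exact g1
  · intro s
    rw [transSq_left]
    show H (σ 0, s) = _
    rw [show σ (0 : I) = 1 from unitInterval.symm_zero, h4]
  · intro t
    refine transSq_row _ _ _ u.symm (c.trans u') 1 f ?_ ?_ t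
    · intro t'; exact h3 (σ t')
    · intro t'
      refine transSq_row _ _ _ c u' 1 f ?_ ?_ t'
      · exact k3
      · exact g3
  · intro s
    rw [transSq_right, transSq_right]
    exact g4 s
  · intro t s
    refine transSq_p p _ _ _ u.symm (c.trans u') ?_ ?_ t s
    · intro t' s'; exact h5 (σ t') s'
    · intro t' s'
      exact transSq_p p _ _ _ c u' k5 g5 t' s'

lemma pj_nonpos {r : ℝ} (h : r ≤ 0) : pj r = 0 := by
  simpa using Set.projIcc_of_le_left zero_le_one h

lemma pj_ge_one {r : ℝ} (h : 1 ≤ r) : pj r = 1 := by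
  simpa using Set.projIcc_of_right_le zero_le_one h

/-- totality of the relation `Srel` -/
lemma Srel_total (Λ : C(LX p × I, E)) (hΛ0 : ∀ z, Λ (z, 0) = z.1.1)
    (hΛp : ∀ z t, p (Λ (z, t)) = z.1.2 t)
    {f : C(E, E)} (hf : ∀ e, p (f e) = p e) {x y : E}
    (ωx : Path x (f x)) (hωx : ∀ t, p (ωx t) = p x)
    (ωy : Path y (f y)) (hωy : ∀ t, p (ωy t) = p y)
    (u : Path x y) (θ : FLoop p x) : ∃ γ : FLoop p y, Srel p f ωx ωy θ γ := by
  classical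
  set w : C(I, B) := ⟨fun t => p (u t), by fun_prop⟩ with hwdef
  have hw : ∀ t, w t = p (u t) := fun t => rfl
  set Lc : Path x (f x) := θ.1.trans ωx with hLcdef
  have hLc : ∀ s, p (Lc s) = p x := fiber_trans' θ.2 hωx
  have hw0 : ∀ s, w 0 = p (Lc s) := by
    intro s
    rw [hw 0, u.source, hLc]
  -- the middle square of rowwise lifts
  set M : C(I × I, E) := ⟨fun z => Λ (⟨(Lc z.2, w), hw0 z.2⟩, z.1), by
    apply Λ.continuous.comp
    apply Continuous.prodMk
    · apply Continuous.subtype_mk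
      exact (Lc.continuous.comp continuous_snd).prodMk continuous_const
    · exact continuous_fst⟩ with hMdef
  have Mleft : ∀ s, M (0, s) = Lc s := fun s => hΛ0 _
  have Mp : ∀ t s, p (M (t, s)) = w t := fun t s => hΛp _ _
  set β : C(I, E) := ⟨fun t => M (t, 0), by fun_prop⟩ with hβdef
  set δ : C(I, E) := ⟨fun t => M (t, 1), by fun_prop⟩ with hδdef
  have hβ0 : β 0 = x := by
    show M (0, 0) = x
    rw [Mleft, hLcdef]
    exact Path.source _
  have hδ0 : δ 0 = f x := by
    show M (0, 1) = f x
    rw [Mleft, hLcdef]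
    exact Path.target _
  obtain ⟨K₁, k1bot, k1top, k1left, k1p⟩ := vertConn Λ hΛ0 hΛp w u.toContinuousMap β
    (fun t => rfl) (fun t => Mp t 0) (by rw [show u.toContinuousMap 0 = x from u.source, hβ0])
  obtain ⟨K₂, k2bot, k2top, k2left, k2p⟩ := vertConn Λ hΛ0 hΛp w δ
    (f.comp u.toContinuousMap) (fun t => Mp t 1)
    (fun t => by show p (f (u t)) = w t; rw [hf, hw])
    (by rw [hδ0]; show f x = f (u.toContinuousMap 0); rw [show u.toContinuousMap 0 = x from u.source])
  have hq1 : ∀ t, K₁ (t, 1) = M (t, 0) := fun t => k1top t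
  have hq2 : ∀ t, vtransSq K₁ M hq1 (t, 1) = K₂ (t, 0) := fun t => by
    rw [vtransSq_top, k2bot]; rfl
  set St : C(I × I, E) := vtransSq (vtransSq K₁ M hq1) K₂ hq2 with hStdef
  have Stbot : ∀ t, St (t, 0) = u t := fun t => by
    rw [hStdef, vtransSq_bot, vtransSq_bot, k1bot]; rfl
  have Sttop : ∀ t, St (t, 1) = f (u t) := fun t => by
    rw [hStdef, vtransSq_top, k2top]; rfl
  have Stp : ∀ t s, p (St (t, s)) = p (u t) := by
    intro t s
    rw [hStdef, vtransSq_apply]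
    split_ifs with h
    · rw [vtransSq_apply]
      split_ifs with h2
      · rw [k1p]; rfl
      · rw [Mp]; rfl
    · rw [k2p]; rfl
  have Stleft : ∀ s : I, St (0, s) = Lc (pj (4 * (s : ℝ) - 1)) := by
    intro s
    rw [hStdef, vtransSq_apply]
    split_ifs with h
    · rw [vtransSq_apply]
      split_ifs with h2
      · dsimp only at h2
        rw [k1left, show u.toContinuousMap 0 = x from u.source,
          pj_nonpos (by linarith), hLcdef]
        exact (Path.source _).symm
      · dsimp only at h2
        rw [Mleft, pj_of_mem (by linarith) (by linarith)]
        congr 1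
        exact Subtype.ext (by dsimp only; ring)
    · push_neg at h
      rw [k2left, hδ0, pj_ge_one (by linarith), hLcdef]
      exact (Path.target _).symm
  -- the right edge of the stack
  have hry : St (1, 0) = y := by rw [Stbot]; exact u.target
  have hrfy : St (1, 1) = f y := by rw [Sttop, u.target]
  set r : Path y (f y) := ⟨⟨fun s => St (1, s), by fun_prop⟩, hry, hrfy⟩ with hrdef
  have hr : ∀ s, p (r s) = p y := by
    intro s
    show p (St (1, s)) = p y
    rw [Stp, u.target]
  -- the left reparametrisation square
  set Wl : C(I × I, E) := ⟨fun z => Lc (pj ((1 - (z.1 : ℝ)) * z.2 +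
      z.1 * (pj (4 * (z.2 : ℝ) - 1) : ℝ))), by
    apply Lc.continuous.comp
    apply continuous_pj.comp
    have c1 : Continuous fun z : I × I => (z.1 : ℝ) := by fun_prop
    have c2 : Continuous fun z : I × I => (z.2 : ℝ) := by fun_prop
    exact ((continuous_const.sub c1).mul c2).add
      (c1.mul (continuous_subtype_val.comp (continuous_pj.comp (by fun_prop))))⟩ with hWldef
  have Wlleft : ∀ s, Wl (0, s) = Lc s := by
    intro s
    show Lc (pj ((1 - ((0 : I) : ℝ)) * s + ((0 : I) : ℝ) * _)) = Lc s
    norm_num [pj_coe]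
  have Wlbot : ∀ t : I, Wl (t, 0) = x := by
    intro t
    show Lc (pj ((1 - (t : ℝ)) * ((0 : I) : ℝ) + (t : ℝ) * (pj (4 * ((0 : I) : ℝ) - 1) : ℝ))) = x
    norm_num [pj_nonpos, pj_zero]
  have Wltop : ∀ t : I, Wl (t, 1) = f x := by
    intro t
    show Lc (pj ((1 - (t : ℝ)) * ((1 : I) : ℝ) + (t : ℝ) * (pj (4 * ((1 : I) : ℝ) - 1) : ℝ))) = f x
    norm_num [pj_ge_one, pj_one]
  have Wlp : ∀ t s, p (Wl (t, s)) = p x := fun t s => hLc _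
  have hWlSt : ∀ s, Wl (1, s) = St (0, s) := by
    intro s
    rw [Stleft]
    show Lc (pj ((1 - ((1 : I) : ℝ)) * s + ((1 : I) : ℝ) * (pj (4 * (s : ℝ) - 1) : ℝ))) = _
    norm_num [pj_coe]
  -- the right cancellation square
  set γp : Path y y := r.trans ωy.symm with hγpdef
  set Qr : C(I × I, E) := ⟨fun z => if 4 * (z.2 : ℝ) + 3 * z.1 ≤ 4
      then r.extend (4 * z.2 / (4 - 3 * z.1))
      else ωy.extend (max (5 - 4 * (z.2 : ℝ) - 3 * z.1) (2 * z.2 - 1)), by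
    apply Continuous.if_le
    · apply r.continuous_extend.comp
      apply Continuous.div (by fun_prop) (by fun_prop)
      intro z
      have := z.1.2.2
      intro hc
      nlinarith
    · apply ωy.continuous_extend.comp
      exact Continuous.max (by fun_prop) (by fun_prop)
    · fun_prop
    · fun_prop
    · intro z hz
      have h1 : 4 * (z.2 : ℝ) / (4 - 3 * z.1) = 1 := by
        have : (4 : ℝ) - 3 * z.1 ≥ 1 := by linarith [z.1.2.2]
        field_simp
        linarith
      have h2 : (5 : ℝ) - 4 * z.2 - 3 * z.1 = 1 := by linarith
      rw [h1, h2, max_eq_left (by linarith [z.2.2.2]), Path.extend_one, Path.extend_one]⟩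
    with hQrdef
  have Qrleft : ∀ s, Qr (0, s) = r s := by
    intro s
    show ite _ _ _ = _
    rw [if_pos (by norm_num; linarith [s.2.2])]
    norm_num
  have Qrbot : ∀ t : I, Qr (t, 0) = y := by
    intro t
    show ite _ _ _ = _
    rw [if_pos (by norm_num; linarith [t.2.2])]
    norm_num
  have Qrtop : ∀ t : I, Qr (t, 1) = f y := by
    intro t
    show ite _ _ _ = _
    split_ifs with h
    · norm_num at h
      have : 4 * ((1 : I) : ℝ) / (4 - 3 * (t : ℝ)) = 1 := by
        have : (t : ℝ) = 0 := le_antisymm (by norm_num at h ⊢; linarith) t.2.1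
        rw [this]
        norm_num
      rw [this, Path.extend_one]
    · rw [max_eq_right (by norm_num; linarith [t.2.1]),
        show (2 : ℝ) * ((1 : I) : ℝ) - 1 = 1 by norm_num, Path.extend_one]
  have Qrp : ∀ t s, p (Qr (t, s)) = p y := by
    intro t s
    show p (ite _ _ _) = _
    split_ifs with h
    · exact hr _
    · exact hωy _
  have Qrright : ∀ s, Qr (1, s) = (γp.trans ωy) s := by
    intro s
    show ite _ _ _ = _
    rw [Path.trans_apply]
    split_ifs with h h2
    · -- 4s + 3 ≤ 4, s ≤ 1/2
      norm_num at h
      rw [hγpdef, Path.trans_apply]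
      rw [dif_pos (by dsimp only; linarith)]
      rw [show (4 : ℝ) * s / (4 - 3 * ((1 : I) : ℝ)) = 4 * s by norm_num]
      rw [r.extend_apply (t := 4 * (s : ℝ)) ⟨by linarith [s.2.1], by linarith⟩]
      congr 1
      exact Subtype.ext (by dsimp only; ring)
    · -- 4s + 3 ≤ 4 but s > 1/2 : impossible
      norm_num at h h2
      linarith
    · -- 4s + 3 > 4, s ≤ 1/2 : the ωy.symm part
      norm_num at h
      rw [hγpdef, Path.trans_apply]
      rw [dif_neg (by dsimp only; intro hc; linarith)]
      rw [show max ((5 : ℝ) - 4 * s - 3 * ((1 : I) : ℝ)) (2 * s - 1) = 2 - 4 * s by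
        rw [max_eq_left (by norm_num; linarith)]; norm_num; ring]
      rw [ωy.extend_apply (t := 2 - 4 * (s : ℝ)) ⟨by linarith, by linarith⟩]
      show _ = ωy.symm _
      rw [Path.symm_apply]
      show _ = ωy (σ _)
      congr 1
      apply Subtype.ext
      rw [unitInterval.coe_symm_eq]
      dsimp only
      ring
    · -- s > 1/2 : the final ωy part
      norm_num at h
      rw [show max ((5 : ℝ) - 4 * s - 3 * ((1 : I) : ℝ)) (2 * s - 1) = 2 * s - 1 by
        rw [max_eq_right (by norm_num; linarith)]]
      rw [ωy.extend_apply (t := 2 * (s : ℝ) - 1) ⟨by linarith, by linarith [s.2.2]⟩]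
  -- assemble
  have hStQr : ∀ s, transSq Wl St hWlSt (1, s) = Qr (0, s) := by
    intro s
    rw [transSq_right, Qrleft]
    rfl
  set F : C(I × I, E) := transSq (transSq Wl St hWlSt) Qr hStQr with hFdef
  have hγfib : ∀ t, p (γp t) = p y := fiber_trans' hr (fun t => hωy (σ t))
  refine ⟨⟨γp, hγfib⟩, ((Path.refl x).trans u).trans (Path.refl y), F, ?_, ?_, ?_, ?_, ?_⟩
  · intro t
    refine transSq_row _ _ _ ((Path.refl x).trans u) (Path.refl y) 0 id ?_ ?_ t
    · intro t'
      refine transSq_row _ _ _ (Path.refl x) u 0 id ?_ ?_ t'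
      · intro t''; exact Wlbot t''
      · exact Stbot
    · intro t'; exact Qrbot t'
  · intro s
    rw [hFdef, transSq_left, transSq_left, Wlleft]
  · intro t
    refine transSq_row _ _ _ ((Path.refl x).trans u) (Path.refl y) 1 f ?_ ?_ t
    · intro t'
      refine transSq_row _ _ _ (Path.refl x) u 1 f ?_ ?_ t'
      · intro t''; exact Wltop t''
      · exact Sttop
    · intro t'; exact Qrtop t'
  · intro s
    rw [hFdef, transSq_right]
    exact Qrright s
  · intro t s
    refine transSq_p p _ _ _ ((Path.refl x).trans u) (Path.refl y) ?_ ?_ t s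
    · intro t' s'
      exact transSq_p p _ _ _ (Path.refl x) u (fun a b' => Wlp a b') Stp t' s'
    · intro t' s'; exact Qrp t' s'

end RBAux

open RBAux in
theorem reidemeister_basepoint_change {E B : Type} [TopologicalSpace E] [TopologicalSpace B]
    [CompactSpace E] [CompactSpace B] [PathConnectedSpace E] [PathConnectedSpace B]
    [T2Space E] [T2Space B] {dE dB : ℕ}
    [ChartedSpace (EuclideanSpace ℝ (Fin dE)) E]
    [ChartedSpace (EuclideanSpace ℝ (Fin dB)) B]
    (p : C(E, B)) (hp : IsHurewiczFibration p)
    (f : C(E, E)) (hf : ∀ x, p (f x) = p x)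
    (x₀ x₁ : E) (u₀ : Path x₀ x₁)
    (ω₀ : Path x₀ (f x₀)) (hω₀ : ∀ t, p (ω₀ t) = p x₀)
    (ω₁ : Path x₁ (f x₁)) (hω₁ : ∀ t, p (ω₁ t) = p x₁) :
    ∃ κ : ReidemeisterSetB p f ω₀ → ReidemeisterSetB p f ω₁,
      Function.Bijective κ ∧
      ∀ (u : Path x₀ x₁) (θ : FiberLoop p x₀) (γ : FiberLoop p x₁) (H : C(I × I, E)),
        (∀ t, H (t, 0) = u t) →
        (∀ s, H (0, s) = (θ.1.trans ω₀) s) →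
        (∀ t, H (t, 1) = f (u t)) →
        (∀ s, H (1, s) = (γ.1.trans ω₁) s) →
        (∀ t s, p (H (t, s)) = p (u t)) →
        κ (rClass p f ω₀ θ) = rClass p f ω₁ γ := by
  classical
  obtain ⟨Λ, hΛ0, hΛp⟩ := exists_liftFun hp
  choose g hg using fun θ => Srel_total Λ hΛ0 hΛp hf ω₀ hω₀ ω₁ hω₁ u₀ θ
  choose g' hg' using fun γ => Srel_total Λ hΛ0 hΛp hf ω₁ hω₁ ω₀ hω₀ u₀.symm γ
  refine ⟨Quot.lift (fun θ => Quot.mk (ReidemeisterRelB p f ω₁) (g θ))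
      (fun θ θ' hR => Quot.sound (glue hR (hg θ) (hg θ'))), ?_, ?_⟩
  · apply Function.bijective_iff_has_inverse.mpr
    refine ⟨Quot.lift (fun γ => Quot.mk (ReidemeisterRelB p f ω₀) (g' γ))
      (fun γ γ' hR => Quot.sound (glue hR (hg' γ) (hg' γ'))), ?_, ?_⟩
    · intro a
      induction a using Quot.ind with
      | _ θ =>
        show Quot.mk (ReidemeisterRelB p f ω₀) (g' (g θ)) = Quot.mk (ReidemeisterRelB p f ω₀) θ
        exact (Quot.sound (glue (RRel_refl hω₁ (g θ)) (Srel_symm (hg θ)) (hg' (g θ)))).symm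
    · intro a
      induction a using Quot.ind with
      | _ γ =>
        show Quot.mk (ReidemeisterRelB p f ω₁) (g (g' γ)) = Quot.mk (ReidemeisterRelB p f ω₁) γ
        exact (Quot.sound (glue (RRel_refl hω₀ (g' γ)) (Srel_symm (hg' γ)) (hg (g' γ)))).symm
  · intro u θ γ H h1 h2 h3 h4 h5
    have hS : Srel p f ω₀ ω₁ θ γ := ⟨u, H, h1, h2, h3, h4, h5⟩
    show Quot.mk (ReidemeisterRelB p f ω₁) (g θ) = Quot.mk (ReidemeisterRelB p f ω₁) γ
    exact Quot.sound (glue (RRel_refl hω₀ θ) (hg θ) hS)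
end

section
/- Let f: E → E be a fiber map over B, x₀ ∈ E, and ω a path from x₀ to f(x₀) lying in the fiber Y = p⁻¹(p(x₀)). Then the map Γ: R_B(f; x₀, ω) → π₀(E_B(f)) defined by sending the class of [θ] ∈ π₁(Y, x₀) to the path component of the point (x₀, θ∗ω) in E_B(f) is a well-defined bijection. -/
open unitInterval

variable {E B : Type} [TopologicalSpace E] [TopologicalSpace B]

namespace RAux

noncomputable def pj : ℝ → I := Set.projIcc 0 1 zero_le_one

@[fun_prop] lemma pj_cont : Continuous pj := continuous_projIcc

@[simp] lemma pj_coe (t : I) : pj (t : ℝ) = t := by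
  simp [pj, Set.projIcc_of_mem, t.2]

@[simp] lemma pj_zero : pj 0 = 0 := by simpa using pj_coe 0

@[simp] lemma pj_one : pj 1 = 1 := by simpa using pj_coe 1

variable {E B : Type} [TopologicalSpace E] [TopologicalSpace B]

/-- Track-correction square: given two maps `a b : I → E` with the same projection and the
same starting point, produce a continuous family `g t : fiber path from a t to b t` lying in
the fiber over `p (a t)`, together with a square `N` contracting `g 0` to the constant. -/
lemma corr (p : C(E, B)) (hp : IsHurewiczFibration p) (a b : C(I, E))
    (hab : ∀ t, p (b t) = p (a t)) (h00 : a 0 = b 0) :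
    ∃ g N : C(I × I, E),
      (∀ t u, p (g (t, u)) = p (a t)) ∧ (∀ t, g (t, 0) = a t) ∧ (∀ t, g (t, 1) = b t) ∧
      (∀ r u, p (N (r, u)) = p (a 0)) ∧ (∀ u, N (0, u) = a 0) ∧ (∀ u, N (1, u) = g (0, u)) ∧
      (∀ r, N (r, 0) = a 0) ∧ (∀ r, N (r, 1) = a 0) := by
  classical
  -- the folded map ν
  have hνc : Continuous (fun z : I × I =>
      if (z.2 : ℝ) ≤ 1 / 2 then a (pj ((z.1 : ℝ) * (1 - 2 * (z.2 : ℝ))))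
      else b (pj ((z.1 : ℝ) * (2 * (z.2 : ℝ) - 1)))) := by
    apply Continuous.if_le
    · exact a.continuous.comp (pj_cont.comp (by fun_prop))
    · exact b.continuous.comp (pj_cont.comp (by fun_prop))
    · fun_prop
    · fun_prop
    · intro z hz
      have h1 : (1 : ℝ) - 2 * (z.2 : ℝ) = 0 := by rw [hz]; ring
      have h2 : 2 * (z.2 : ℝ) - 1 = 0 := by rw [hz]; ring
      simp [h1, h2, h00]
  set ν : C(I × I, E) := ⟨_, hνc⟩ with hν
  have hνapp : ∀ z : I × I, ν z =
      if (z.2 : ℝ) ≤ 1 / 2 then a (pj ((z.1 : ℝ) * (1 - 2 * (z.2 : ℝ))))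
      else b (pj ((z.1 : ℝ) * (2 * (z.2 : ℝ) - 1))) := fun z => rfl
  -- base homotopy
  have hHbc : Continuous (fun w : (I × I) × I =>
      p (a (pj ((w.1.1 : ℝ) * ((1 - (w.2 : ℝ)) * |1 - 2 * (w.1.2 : ℝ)| + (w.2 : ℝ)))))) := by
    apply p.continuous.comp; apply a.continuous.comp; apply pj_cont.comp; fun_prop
  set Hb : C((I × I) × I, B) := ⟨_, hHbc⟩ with hHb
  have hcheck : ∀ z : I × I, Hb (z, 0) = p (ν z) := by
    intro z
    rcases z with ⟨t, u⟩
    rw [hνapp]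
    by_cases h : (u : ℝ) ≤ 1 / 2
    · have habs : |1 - 2 * (u : ℝ)| = 1 - 2 * (u : ℝ) := by
        rw [abs_of_nonneg]; linarith
      simp only [hHb, ContinuousMap.coe_mk, if_pos h]
      norm_num [habs]
    · have hu : (1 : ℝ) / 2 < (u : ℝ) := not_le.mp h
      have habs : |1 - 2 * (u : ℝ)| = 2 * (u : ℝ) - 1 := by
        rw [abs_of_nonpos (by linarith)]; ring
      simp only [hHb, ContinuousMap.coe_mk, if_neg h]
      rw [hab]
      norm_num [habs]
  obtain ⟨D, hD0, hDp⟩ := hp (I × I) Hb ν hcheck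
  -- the corrected family g
  have hgc : Continuous (fun z : I × I =>
      if (z.2 : ℝ) ≤ 1 / 3 then D ((z.1, 0), pj (3 * (z.2 : ℝ)))
      else if (z.2 : ℝ) ≤ 2 / 3 then D ((z.1, pj (3 * (z.2 : ℝ) - 1)), 1)
      else D ((z.1, 1), pj (3 - 3 * (z.2 : ℝ)))) := by
    apply Continuous.if_le
    · exact D.continuous.comp (by fun_prop)
    · apply Continuous.if_le
      · exact D.continuous.comp (by fun_prop)
      · exact D.continuous.comp (by fun_prop)
      · fun_prop
      · fun_prop
      · intro z hz
        have h1 : 3 * (z.2 : ℝ) - 1 = 1 := by rw [hz]; ring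
        have h2 : 3 - 3 * (z.2 : ℝ) = 1 := by rw [hz]; ring
        rw [h1, h2, pj_one]
    · fun_prop
    · fun_prop
    · intro z hz
      have h1 : 3 * (z.2 : ℝ) = 1 := by rw [hz]; ring
      have h2 : 3 * (z.2 : ℝ) - 1 = 0 := by rw [hz]; ring
      have h3 : ((z.2 : ℝ) ≤ 2 / 3) := by rw [hz]; norm_num
      rw [if_pos h3, h2, h1, pj_one, pj_zero]
  set g : C(I × I, E) := ⟨_, hgc⟩ with hg
  have hgapp : ∀ z : I × I, g z =
      if (z.2 : ℝ) ≤ 1 / 3 then D ((z.1, 0), pj (3 * (z.2 : ℝ)))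
      else if (z.2 : ℝ) ≤ 2 / 3 then D ((z.1, pj (3 * (z.2 : ℝ) - 1)), 1)
      else D ((z.1, 1), pj (3 - 3 * (z.2 : ℝ))) := fun z => rfl
  -- the contraction square N
  have hNc : Continuous (fun z : I × I =>
      if (z.2 : ℝ) ≤ 1 / 3 then D ((0, 0), pj (3 * (z.2 : ℝ) * (z.1 : ℝ)))
      else if (z.2 : ℝ) ≤ 2 / 3 then D ((0, pj (3 * (z.2 : ℝ) - 1)), z.1)
      else D ((0, 1), pj ((3 - 3 * (z.2 : ℝ)) * (z.1 : ℝ)))) := by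
    apply Continuous.if_le
    · exact D.continuous.comp (by fun_prop)
    · apply Continuous.if_le
      · exact D.continuous.comp (by fun_prop)
      · exact D.continuous.comp (by fun_prop)
      · fun_prop
      · fun_prop
      · intro z hz
        have h1 : 3 * (z.2 : ℝ) - 1 = 1 := by rw [hz]; ring
        have h2 : (3 - 3 * (z.2 : ℝ)) * (z.1 : ℝ) = (z.1 : ℝ) := by rw [hz]; ring
        rw [h1, h2, pj_one, pj_coe]
    · fun_prop
    · fun_prop
    · intro z hz
      have h1 : 3 * (z.2 : ℝ) * (z.1 : ℝ) = (z.1 : ℝ) := by rw [hz]; ring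
      have h2 : 3 * (z.2 : ℝ) - 1 = 0 := by rw [hz]; ring
      have h3 : ((z.2 : ℝ) ≤ 2 / 3) := by rw [hz]; norm_num
      rw [if_pos h3, h2, h1, pj_zero, pj_coe]
  set N : C(I × I, E) := ⟨_, hNc⟩ with hN
  have hNapp : ∀ z : I × I, N z =
      if (z.2 : ℝ) ≤ 1 / 3 then D ((0, 0), pj (3 * (z.2 : ℝ) * (z.1 : ℝ)))
      else if (z.2 : ℝ) ≤ 2 / 3 then D ((0, pj (3 * (z.2 : ℝ) - 1)), z.1)
      else D ((0, 1), pj ((3 - 3 * (z.2 : ℝ)) * (z.1 : ℝ))) := fun z => rfl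
  have hDp' : ∀ (t u τ : I), p (D ((t, u), τ)) =
      p (a (pj ((t : ℝ) * ((1 - (τ : ℝ)) * |1 - 2 * (u : ℝ)| + (τ : ℝ))))) := by
    intro t u τ; rw [hDp]; simp only [hHb, ContinuousMap.coe_mk]
  have key : ∀ (t u τ : I), |1 - 2 * (u : ℝ)| = 1 → p (D ((t, u), τ)) = p (a t) := by
    intro t u τ habs
    rw [hDp' t u τ, habs]
    have e : (t : ℝ) * ((1 - (τ : ℝ)) * 1 + (τ : ℝ)) = (t : ℝ) := by ring
    rw [e, pj_coe]
  have habs0 : |1 - 2 * ((0 : I) : ℝ)| = 1 := by norm_num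
  have habs1 : |1 - 2 * ((1 : I) : ℝ)| = 1 := by norm_num
  have key1 : ∀ (t s : I), p (D ((t, s), 1)) = p (a t) := by
    intro t s
    rw [hDp' t s 1]
    have e : (t : ℝ) * ((1 - ((1 : I) : ℝ)) * |1 - 2 * (s : ℝ)| + ((1 : I) : ℝ)) = (t : ℝ) := by
      norm_num
    rw [e, pj_coe]
  have key0 : ∀ (s τ : I), p (D ((0, s), τ)) = p (a 0) := by
    intro s τ
    rw [hDp' 0 s τ]
    have e : ((0 : I) : ℝ) * ((1 - (τ : ℝ)) * |1 - 2 * (s : ℝ)| + (τ : ℝ)) = 0 := by norm_num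
    rw [e, pj_zero]
  have hν0 : ∀ s : I, ν (0, s) = a 0 := by
    intro s
    rw [hνapp]
    dsimp only
    split_ifs
    · norm_num
    · norm_num [← h00]
  have hD00 : ∀ s : I, D ((0, s), 0) = a 0 := fun s => by rw [hD0]; exact hν0 s
  have hgt0 : ∀ t : I, g (t, 0) = a t := by
    intro t
    rw [hgapp]
    dsimp only
    rw [if_pos (by norm_num : ((0 : I) : ℝ) ≤ 1 / 3)]
    have e : 3 * ((0 : I) : ℝ) = 0 := by norm_num
    rw [e, pj_zero, hD0, hνapp]
    dsimp only
    rw [if_pos (by norm_num : ((0 : I) : ℝ) ≤ 1 / 2)]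
    have e2 : (t : ℝ) * (1 - 2 * ((0 : I) : ℝ)) = (t : ℝ) := by norm_num
    rw [e2, pj_coe]
  refine ⟨g, N, ?_, hgt0, ?_, ?_, ?_, ?_, ?_, ?_⟩
  · -- p (g (t,u)) = p (a t)
    intro t u
    rw [hgapp]
    dsimp only
    split_ifs
    · exact key t 0 _ habs0
    · exact key1 t _
    · exact key t 1 _ habs1
  · -- g (t,1) = b t
    intro t
    rw [hgapp]
    dsimp only
    rw [if_neg (by norm_num : ¬ ((1 : I) : ℝ) ≤ 1 / 3),
        if_neg (by norm_num : ¬ ((1 : I) : ℝ) ≤ 2 / 3)]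
    have e : 3 - 3 * ((1 : I) : ℝ) = 0 := by norm_num
    rw [e, pj_zero, hD0, hνapp]
    dsimp only
    rw [if_neg (by norm_num : ¬ ((1 : I) : ℝ) ≤ 1 / 2)]
    have e2 : (t : ℝ) * (2 * ((1 : I) : ℝ) - 1) = (t : ℝ) := by norm_num
    rw [e2, pj_coe]
  · -- p (N (r,u)) = p (a 0)
    intro r u
    rw [hNapp]
    dsimp only
    split_ifs
    · exact key0 _ _
    · exact key0 _ _
    · exact key0 _ _
  · -- N (0,u) = a 0
    intro u
    rw [hNapp]
    dsimp only
    split_ifs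
    · have e : 3 * (u : ℝ) * ((0 : I) : ℝ) = 0 := by norm_num
      rw [e, pj_zero]; exact hD00 0
    · rw [show ((0:I) : I) = (0 : I) from rfl]
      exact hD00 _
    · have e : (3 - 3 * (u : ℝ)) * ((0 : I) : ℝ) = 0 := by norm_num
      rw [e, pj_zero]; exact hD00 1
  · -- N (1,u) = g (0,u)
    intro u
    rw [hNapp, hgapp]
    dsimp only
    split_ifs
    · have e : 3 * (u : ℝ) * ((1 : I) : ℝ) = 3 * (u : ℝ) := by norm_num
      rw [e]
    · rfl
    · have e : (3 - 3 * (u : ℝ)) * ((1 : I) : ℝ) = 3 - 3 * (u : ℝ) := by norm_num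
      rw [e]
  · -- N (r,0) = a 0
    intro r
    rw [hNapp]
    dsimp only
    rw [if_pos (by norm_num : ((0 : I) : ℝ) ≤ 1 / 3)]
    have e : 3 * ((0 : I) : ℝ) * (r : ℝ) = 0 := by norm_num
    rw [e, pj_zero]; exact hD00 0
  · -- N (r,1) = a 0
    intro r
    rw [hNapp]
    dsimp only
    rw [if_neg (by norm_num : ¬ ((1 : I) : ℝ) ≤ 1 / 3),
        if_neg (by norm_num : ¬ ((1 : I) : ℝ) ≤ 2 / 3)]
    have e : (3 - 3 * ((1 : I) : ℝ)) * (r : ℝ) = 0 := by norm_num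
    rw [e, pj_zero]; exact hD00 1

end RAux


namespace RAux

variable {E B : Type} [TopologicalSpace E] [TopologicalSpace B]

/-- The basepoint of the component `Γ [θ]`. -/
noncomputable def ptOf (p : C(E, B)) (f : C(E, E)) {x₀ : E} (ω : Path x₀ (f x₀))
    (hω : ∀ t, p (ω t) = p x₀) (θ : FiberLoop p x₀) : EBSpace p f :=
  ⟨(x₀, (θ.1.trans ω).toContinuousMap),
    fun t => fiber_trans θ.2 hω t, (θ.1.trans ω).source, (θ.1.trans ω).target⟩

/-- Move A : a square with fixed ends and constant projection gives a path in `E_B(f)`. -/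
lemma moveA {p : C(E, B)} {f : C(E, E)} (z z' : EBSpace p f) (hx : z'.1.1 = z.1.1)
    (M : C(I × I, E)) (hM0 : ∀ s, M (0, s) = z.1.2 s) (hM1 : ∀ s, M (1, s) = z'.1.2 s)
    (hMl : ∀ r, M (r, 0) = z.1.1) (hMr : ∀ r, M (r, 1) = f z.1.1)
    (hMp : ∀ r s, p (M (r, s)) = p z.1.1) : Joined z z' := by
  refine ⟨⟨⟨fun r => ⟨(z.1.1, M.curry r),
      ⟨fun s => by simpa using hMp r s, by simpa using hMl r, by simpa using hMr r⟩⟩, ?_⟩,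
      ?_, ?_⟩⟩
  · exact Continuous.subtype_mk (continuous_const.prodMk M.curry.continuous) _
  · refine Subtype.ext (Prod.ext rfl (ContinuousMap.ext fun s => ?_))
    simpa using hM0 s
  · refine Subtype.ext (Prod.ext hx.symm (ContinuousMap.ext fun s => ?_))
    simpa using hM1 s

/-- Reidemeister relation implies joinedness of the corresponding basepoints. -/
lemma joined_of_rel {p : C(E, B)} {f : C(E, E)} {x₀ : E} {ω : Path x₀ (f x₀)}
    (hω : ∀ t, p (ω t) = p x₀) (θ θ' : FiberLoop p x₀)
    (h : ReidemeisterRelB p f ω θ θ') :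
    Joined (ptOf p f ω hω θ) (ptOf p f ω hω θ') := by
  obtain ⟨c, H, hH0, hHl, hH1, hHr, hHp⟩ := h
  refine ⟨⟨⟨fun t => ⟨(c t, H.curry t),
      ⟨fun s => by simpa using hHp t s, by simpa using hH0 t, by simpa using hH1 t⟩⟩, ?_⟩,
      ?_, ?_⟩⟩
  · exact Continuous.subtype_mk (c.continuous.prodMk H.curry.continuous) _
  · refine Subtype.ext (Prod.ext c.source (ContinuousMap.ext fun s => ?_))
    exact hHl s
  · refine Subtype.ext (Prod.ext c.target (ContinuousMap.ext fun s => ?_))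
    exact hHr s

/-- Joinedness of basepoints implies the Reidemeister relation. -/
lemma rel_of_joined {p : C(E, B)} {f : C(E, E)} {x₀ : E} {ω : Path x₀ (f x₀)}
    (hω : ∀ t, p (ω t) = p x₀) (θ θ' : FiberLoop p x₀)
    (h : Joined (ptOf p f ω hω θ) (ptOf p f ω hω θ')) :
    ReidemeisterRelB p f ω θ θ' := by
  obtain ⟨γ⟩ := h
  have hc : Continuous fun t : I => ((γ t).1 : E × C(I, E)).1 :=
    (continuous_fst.comp continuous_subtype_val).comp γ.continuous
  have hcm : Continuous fun t : I => ((γ t).1 : E × C(I, E)).2 :=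
    (continuous_snd.comp continuous_subtype_val).comp γ.continuous
  refine ⟨⟨⟨fun t => (γ t).1.1, hc⟩, congrArg (fun z : EBSpace p f => z.1.1) γ.source,
    congrArg (fun z : EBSpace p f => z.1.1) γ.target⟩,
    (ContinuousMap.uncurry ⟨fun t => (γ t).1.2, hcm⟩), ?_, ?_, ?_, ?_, ?_⟩
  · intro t
    exact ((γ t).2.2.1 : (γ t).1.2 0 = (γ t).1.1)
  · intro s
    have h0 : γ 0 = ptOf p f ω hω θ := γ.source
    simp only [ContinuousMap.uncurry_apply, ContinuousMap.coe_mk, Function.uncurry]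
    rw [h0]
    rfl
  · intro t
    exact ((γ t).2.2.2 : (γ t).1.2 1 = f (γ t).1.1)
  · intro s
    have h1 : γ 1 = ptOf p f ω hω θ' := γ.target
    simp only [ContinuousMap.uncurry_apply, ContinuousMap.coe_mk, Function.uncurry]
    rw [h1]
    rfl
  · intro t s
    exact ((γ t).2.1 s : p ((γ t).1.2 s) = p (γ t).1.1)

lemma joined_equivalence {X : Type} [TopologicalSpace X] : Equivalence (@Joined X _) :=
  ⟨Joined.refl, fun h => h.symm, fun h h' => h.trans h'⟩

lemma piComp_eq_iff {X : Type} [TopologicalSpace X] (x y : X) :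
    piComp x = piComp y ↔ Joined x y := by
  rw [piComp, piComp]
  exact Quot.eq.trans (Equivalence.eqvGen_iff joined_equivalence)

end RAux

namespace RAux

/-- Surjectivity step: every point of `E_B(f)` is joined to a canonical basepoint. -/
lemma surj_step {E B : Type} [TopologicalSpace E] [TopologicalSpace B]
    [PathConnectedSpace E]
    (p : C(E, B)) (hp : IsHurewiczFibration p) (f : C(E, E)) (hf : ∀ x, p (f x) = p x)
    (x₀ : E) (ω : Path x₀ (f x₀)) (hω : ∀ t, p (ω t) = p x₀) (z : EBSpace p f) :
    ∃ θ : FiberLoop p x₀, Joined (ptOf p f ω hω θ) z := by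
  classical
  obtain ⟨⟨x, α⟩, hzp, hz0, hz1⟩ := z
  simp only at hzp hz0 hz1
  obtain ⟨c⟩ : Nonempty (Path x x₀) := PathConnectedSpace.joined x x₀
  -- Lift the constant-in-s homotopy (s,t) ↦ p (c t) with initial condition α.
  have hHcc : Continuous fun w : I × I => p (c w.2) := by
    exact p.continuous.comp (c.continuous.comp continuous_snd)
  obtain ⟨L, hL0, hLp⟩ := hp I ⟨_, hHcc⟩ α (by
    intro s
    simp only [ContinuousMap.coe_mk]
    rw [c.source, hzp s])
  have hLp' : ∀ (s t : I), p (L (s, t)) = p (c t) := fun s t => hLp (s, t)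
  set lam : C(I, E) := ⟨fun t => L (0, t), L.continuous.comp (by fun_prop)⟩ with hlam
  set mu : C(I, E) := ⟨fun t => L (1, t), L.continuous.comp (by fun_prop)⟩ with hmu
  have hlam0 : lam 0 = x := by
    show L (0, 0) = x
    rw [hL0, hz0]
  have hmu0 : mu 0 = f x := by
    show L (1, 0) = f x
    rw [hL0, hz1]
  -- first correction: from c to lam
  obtain ⟨g, Ng, hgp, hg0, hg1, hNgp, hNg0, hNg1, hNgl, hNgr⟩ :=
    corr p hp c.toContinuousMap lam (fun t => hLp' 0 t) (by rw [hlam0]; exact c.source)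
  -- second correction: from mu to f ∘ lam
  obtain ⟨d, Nd, hdp, hd0, hd1, hNdp, hNd0, hNd1, hNdl, hNdr⟩ :=
    corr p hp mu (f.comp lam) (fun t => by
      show p (f (lam t)) = p (mu t)
      rw [hf (lam t)]
      show p (L (0, t)) = p (L (1, t))
      rw [hLp' 0 t, hLp' 1 t])
      (by
        show mu 0 = f (lam 0)
        rw [hmu0, hlam0])
  have hc0 : c.toContinuousMap 0 = x := c.source
  have hgc : ∀ t, g (t, 0) = c t := hg0
  -- the master family A
  have hAc : Continuous (fun w : I × I =>
      if (w.2 : ℝ) ≤ 1 / 4 then g (w.1, pj (4 * (w.2 : ℝ)))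
      else if (w.2 : ℝ) ≤ 1 / 2 then L (pj (4 * (w.2 : ℝ) - 1), w.1)
      else if (w.2 : ℝ) ≤ 3 / 4 then d (w.1, pj (4 * (w.2 : ℝ) - 2))
      else f (g (w.1, pj (4 - 4 * (w.2 : ℝ))))) := by
    apply Continuous.if_le
    · exact g.continuous.comp (by fun_prop)
    · apply Continuous.if_le
      · exact L.continuous.comp (by fun_prop)
      · apply Continuous.if_le
        · exact d.continuous.comp (by fun_prop)
        · exact (f.continuous.comp g.continuous).comp (by fun_prop)
        · fun_prop
        · fun_prop
        · intro w hw
          have e1 : 4 * (w.2 : ℝ) - 2 = 1 := by rw [hw]; ring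
          have e2 : 4 - 4 * (w.2 : ℝ) = 1 := by rw [hw]; ring
          rw [e1, e2, pj_one, hd1, hg1]
          rfl
      · fun_prop
      · fun_prop
      · intro w hw
        have e1 : 4 * (w.2 : ℝ) - 1 = 1 := by rw [hw]; ring
        have e2 : 4 * (w.2 : ℝ) - 2 = 0 := by rw [hw]; ring
        have e3 : (w.2 : ℝ) ≤ 3 / 4 := by rw [hw]; norm_num
        rw [if_pos e3, e1, e2, pj_one, pj_zero, hd0]
        rfl
    · fun_prop
    · fun_prop
    · intro w hw
      have e1 : 4 * (w.2 : ℝ) = 1 := by rw [hw]; ring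
      have e2 : 4 * (w.2 : ℝ) - 1 = 0 := by rw [hw]; ring
      have e3 : (w.2 : ℝ) ≤ 1 / 2 := by rw [hw]; norm_num
      rw [if_pos e3, e2, e1, pj_one, pj_zero, hg1]
      rfl
  set A : C(I × I, E) := ⟨_, hAc⟩ with hA
  have hAapp : ∀ w : I × I, A w =
      if (w.2 : ℝ) ≤ 1 / 4 then g (w.1, pj (4 * (w.2 : ℝ)))
      else if (w.2 : ℝ) ≤ 1 / 2 then L (pj (4 * (w.2 : ℝ) - 1), w.1)
      else if (w.2 : ℝ) ≤ 3 / 4 then d (w.1, pj (4 * (w.2 : ℝ) - 2))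
      else f (g (w.1, pj (4 - 4 * (w.2 : ℝ)))) := fun w => rfl
  have pA : ∀ t s, p (A (t, s)) = p (c t) := by
    intro t s
    rw [hAapp]
    dsimp only
    split_ifs
    · rw [hgp]; rfl
    · exact hLp' _ t
    · rw [hdp]; exact hLp' 1 t
    · rw [hf, hgp]; rfl
  have hA0 : ∀ t, A (t, 0) = c t := by
    intro t
    rw [hAapp]
    dsimp only
    rw [if_pos (by norm_num : ((0 : I) : ℝ) ≤ 1 / 4)]
    have e : 4 * ((0 : I) : ℝ) = 0 := by norm_num
    rw [e, pj_zero]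
    exact hgc t
  have hA1 : ∀ t, A (t, 1) = f (c t) := by
    intro t
    rw [hAapp]
    dsimp only
    rw [if_neg (by norm_num : ¬ ((1 : I) : ℝ) ≤ 1 / 4),
        if_neg (by norm_num : ¬ ((1 : I) : ℝ) ≤ 1 / 2),
        if_neg (by norm_num : ¬ ((1 : I) : ℝ) ≤ 3 / 4)]
    have e : 4 - 4 * ((1 : I) : ℝ) = 0 := by norm_num
    rw [e, pj_zero]
    exact congrArg f (hgc t)
  -- endpoints of the master path
  have memZ : ∀ t : I, ((c t, A.curry t) : E × C(I, E)) ∈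
      {w : E × C(I, E) | (∀ s, p (w.2 s) = p w.1) ∧ w.2 0 = w.1 ∧ w.2 1 = f w.1} := by
    intro t
    refine ⟨fun s => ?_, ?_, ?_⟩
    · show p (A (t, s)) = p (c t)
      exact pA t s
    · exact hA0 t
    · exact hA1 t
  set Z0 : EBSpace p f := ⟨(c 0, A.curry 0), memZ 0⟩ with hZ0
  set Z1 : EBSpace p f := ⟨(c 1, A.curry 1), memZ 1⟩ with hZ1
  have hZjoin : Joined Z0 Z1 := by
    refine ⟨⟨⟨fun t => ⟨(c t, A.curry t), memZ t⟩, ?_⟩, rfl, rfl⟩⟩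
    exact Continuous.subtype_mk (c.continuous.prodMk A.curry.continuous) _
  -- the fiber loop θ
  set Y := {e : E // p e = p x₀} with hY
  have hy0 : p x₀ = p x₀ := rfl
  have hy1 : p (f x₀) = p x₀ := hf x₀
  have hβmem : ∀ s : I, p (A (1, s)) = p x₀ := fun s => by rw [pA 1 s, c.target]
  set βY : Path (⟨x₀, hy0⟩ : Y) (⟨f x₀, hy1⟩ : Y) :=
    ⟨⟨fun s => ⟨A (1, s), hβmem s⟩, Continuous.subtype_mk (A.continuous.comp (by fun_prop)) _⟩,
      Subtype.ext (by simpa using (hA0 1).trans c.target),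
      Subtype.ext (by simpa using (hA1 1).trans (congrArg f c.target))⟩ with hβY
  set ωY : Path (⟨x₀, hy0⟩ : Y) (⟨f x₀, hy1⟩ : Y) :=
    ⟨⟨fun s => ⟨ω s, hω s⟩, Continuous.subtype_mk ω.continuous _⟩,
      Subtype.ext (by simpa using ω.source), Subtype.ext (by simpa using ω.target)⟩ with hωY
  set θY : Path (⟨x₀, hy0⟩ : Y) (⟨x₀, hy0⟩ : Y) := βY.trans ωY.symm with hθY
  set θ : FiberLoop p x₀ := ⟨θY.map continuous_subtype_val, fun t => by
    show p ((θY t) : E) = p x₀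
    exact (θY t).2⟩ with hθ
  refine ⟨θ, ?_⟩
  -- homotopy (θY.trans ωY) ≃ βY
  have hom : (θY.trans ωY).Homotopic βY := by
    have h1 : ((βY.trans ωY.symm).trans ωY).Homotopic (βY.trans (ωY.symm.trans ωY)) :=
      ⟨Path.Homotopy.transAssoc βY ωY.symm ωY⟩
    have h2 : (ωY.symm.trans ωY).Homotopic (Path.refl _) :=
      ⟨(Path.Homotopy.reflSymmTrans ωY).symm⟩
    have h2' : (βY.trans (ωY.symm.trans ωY)).Homotopic (βY.trans (Path.refl _)) :=
      Path.Homotopic.hcomp (Path.Homotopic.refl βY) h2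
    have h3 : (βY.trans (Path.refl _)).Homotopic βY := ⟨Path.Homotopy.transRefl βY⟩
    exact (h1.trans h2').trans h3
  obtain ⟨F⟩ := hom
  -- Joined (ptOf θ) Z1 via the homotopy F
  have j3 : Joined (ptOf p f ω hω θ) Z1 := by
    refine moveA _ _ (by rw [hZ1]; exact c.target)
      ⟨fun w => ((F w : Y) : E), continuous_subtype_val.comp F.continuous⟩ ?_ ?_ ?_ ?_ ?_
    · intro s
      have : F (0, s) = (θY.trans ωY) s := F.apply_zero s
      show ((F (0, s) : Y) : E) = _
      rw [this]
      show (((θY.trans ωY) s : Y) : E) = ((θ.1.trans ω)) s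
      rw [Path.trans_apply, Path.trans_apply]
      split_ifs with hs
      · rfl
      · rfl
    · intro s
      have : F (1, s) = βY s := F.apply_one s
      show ((F (1, s) : Y) : E) = _
      rw [this]
      rfl
    · intro r
      have : F (r, 0) = (⟨x₀, hy0⟩ : Y) := Path.Homotopy.source F r
      show ((F (r, 0) : Y) : E) = _
      rw [this]
      rfl
    · intro r
      have : F (r, 1) = (⟨f x₀, hy1⟩ : Y) := Path.Homotopy.target F r
      show ((F (r, 1) : Y) : E) = _
      rw [this]
      rfl
    · intro r s
      exact (F (r, s)).2
  -- the reparametrization square M'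
  have hqc : Continuous (fun w : I × I =>
      if (w.2 : ℝ) ≤ 1 / 4 then (0 : ℝ)
      else if (w.2 : ℝ) ≤ 1 / 2 then 4 * (w.2 : ℝ) - 1 else 1) := by
    apply Continuous.if_le
    · fun_prop
    · apply Continuous.if_le
      · fun_prop
      · fun_prop
      · fun_prop
      · fun_prop
      · intro w hw; rw [hw]; norm_num
    · fun_prop
    · fun_prop
    · intro w hw
      have h2 : (w.2 : ℝ) ≤ 1 / 2 := by rw [hw]; norm_num
      rw [if_pos h2, hw]; norm_num
  have hM'c : Continuous (fun w : I × I => α (pj ((1 - (w.1 : ℝ)) * (w.2 : ℝ) +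
      (w.1 : ℝ) * (if (w.2 : ℝ) ≤ 1 / 4 then (0 : ℝ)
        else if (w.2 : ℝ) ≤ 1 / 2 then 4 * (w.2 : ℝ) - 1 else 1)))) := by
    apply α.continuous.comp
    apply pj_cont.comp
    apply Continuous.add
    · fun_prop
    · exact (continuous_subtype_val.comp continuous_fst).mul hqc
  set M' : C(I × I, E) := ⟨_, hM'c⟩ with hM'
  have hM'app : ∀ w : I × I, M' w = α (pj ((1 - (w.1 : ℝ)) * (w.2 : ℝ) +
      (w.1 : ℝ) * (if (w.2 : ℝ) ≤ 1 / 4 then (0 : ℝ)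
        else if (w.2 : ℝ) ≤ 1 / 2 then 4 * (w.2 : ℝ) - 1 else 1))) := fun w => rfl
  have hW : ((x, M'.curry 1) : E × C(I, E)) ∈
      {w : E × C(I, E) | (∀ s, p (w.2 s) = p w.1) ∧ w.2 0 = w.1 ∧ w.2 1 = f w.1} := by
    refine ⟨fun s => ?_, ?_, ?_⟩
    · show p (M' (1, s)) = p x
      rw [hM'app]; exact hzp _
    · show M' (1, 0) = x
      rw [hM'app]
      dsimp only
      rw [if_pos (by norm_num : ((0 : I) : ℝ) ≤ 1 / 4)]
      have e : (1 - ((1 : I) : ℝ)) * ((0 : I) : ℝ) + ((1 : I) : ℝ) * 0 = 0 := by norm_num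
      rw [e, pj_zero, hz0]
    · show M' (1, 1) = f x
      rw [hM'app]
      dsimp only
      rw [if_neg (by norm_num : ¬ ((1 : I) : ℝ) ≤ 1 / 4),
          if_neg (by norm_num : ¬ ((1 : I) : ℝ) ≤ 1 / 2)]
      have e : (1 - ((1 : I) : ℝ)) * ((1 : I) : ℝ) + ((1 : I) : ℝ) * 1 = 1 := by norm_num
      rw [e, pj_one, hz1]
  set W : EBSpace p f := ⟨(x, M'.curry 1), hW⟩ with hWdef
  have j1 : Joined (⟨(x, α), hzp, hz0, hz1⟩ : EBSpace p f) W := by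
    refine moveA _ _ rfl M' ?_ ?_ ?_ ?_ ?_
    · intro s
      rw [hM'app]
      show α _ = α s
      congr 1
      have e : (1 - ((0 : I) : ℝ)) * (s : ℝ) + ((0 : I) : ℝ) *
          (if (s : ℝ) ≤ 1 / 4 then (0 : ℝ)
            else if (s : ℝ) ≤ 1 / 2 then 4 * (s : ℝ) - 1 else 1) = (s : ℝ) := by norm_num
      rw [e, pj_coe]
    · intro s
      rfl
    · intro r
      rw [hM'app]
      show α _ = x
      dsimp only
      rw [if_pos (by norm_num : ((0 : I) : ℝ) ≤ 1 / 4)]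
      have e : (1 - (r : ℝ)) * ((0 : I) : ℝ) + (r : ℝ) * 0 = 0 := by norm_num
      rw [e, pj_zero, hz0]
    · intro r
      rw [hM'app]
      show α _ = f x
      dsimp only
      rw [if_neg (by norm_num : ¬ ((1 : I) : ℝ) ≤ 1 / 4),
          if_neg (by norm_num : ¬ ((1 : I) : ℝ) ≤ 1 / 2)]
      have e : (1 - (r : ℝ)) * ((1 : I) : ℝ) + (r : ℝ) * 1 = 1 := by norm_num
      rw [e, pj_one, hz1]
    · intro r s
      rw [hM'app]
      exact hzp _
  -- the second square M, from W to Z0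
  have hMc : Continuous (fun w : I × I =>
      if (w.2 : ℝ) ≤ 1 / 4 then Ng (w.1, pj (4 * (w.2 : ℝ)))
      else if (w.2 : ℝ) ≤ 1 / 2 then α (pj (4 * (w.2 : ℝ) - 1))
      else if (w.2 : ℝ) ≤ 3 / 4 then Nd (w.1, pj (4 * (w.2 : ℝ) - 2))
      else f (Ng (w.1, pj (4 - 4 * (w.2 : ℝ))))) := by
    apply Continuous.if_le
    · exact Ng.continuous.comp (by fun_prop)
    · apply Continuous.if_le
      · exact α.continuous.comp (by fun_prop)
      · apply Continuous.if_le
        · exact Nd.continuous.comp (by fun_prop)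
        · exact (f.continuous.comp Ng.continuous).comp (by fun_prop)
        · fun_prop
        · fun_prop
        · intro w hw
          have e1 : 4 * (w.2 : ℝ) - 2 = 1 := by rw [hw]; ring
          have e2 : 4 - 4 * (w.2 : ℝ) = 1 := by rw [hw]; ring
          rw [e1, e2, pj_one, hNdr, hNgr]
          show mu 0 = f (c.toContinuousMap 0)
          rw [hmu0, hc0]
      · fun_prop
      · fun_prop
      · intro w hw
        have e1 : 4 * (w.2 : ℝ) - 1 = 1 := by rw [hw]; ring
        have e2 : 4 * (w.2 : ℝ) - 2 = 0 := by rw [hw]; ring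
        have e3 : (w.2 : ℝ) ≤ 3 / 4 := by rw [hw]; norm_num
        rw [if_pos e3, e2, e1, pj_one, pj_zero, hNdl]
        show α 1 = mu 0
        rw [hz1, hmu0]
    · fun_prop
    · fun_prop
    · intro w hw
      have e1 : 4 * (w.2 : ℝ) = 1 := by rw [hw]; ring
      have e2 : 4 * (w.2 : ℝ) - 1 = 0 := by rw [hw]; ring
      have e3 : (w.2 : ℝ) ≤ 1 / 2 := by rw [hw]; norm_num
      rw [if_pos e3, e2, e1, pj_one, pj_zero, hNgr]
      show c.toContinuousMap 0 = α 0
      rw [hc0, hz0]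
  set M : C(I × I, E) := ⟨_, hMc⟩ with hM
  have hMapp : ∀ w : I × I, M w =
      if (w.2 : ℝ) ≤ 1 / 4 then Ng (w.1, pj (4 * (w.2 : ℝ)))
      else if (w.2 : ℝ) ≤ 1 / 2 then α (pj (4 * (w.2 : ℝ) - 1))
      else if (w.2 : ℝ) ≤ 3 / 4 then Nd (w.1, pj (4 * (w.2 : ℝ) - 2))
      else f (Ng (w.1, pj (4 - 4 * (w.2 : ℝ)))) := fun w => rfl
  have j2 : Joined W Z0 := by
    refine moveA _ _ (by rw [hZ0]; exact c.source) M ?_ ?_ ?_ ?_ ?_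
    · -- M (0, s) = W.1.2 s = M' (1, s)
      intro s
      rw [hMapp]
      show _ = M' (1, s)
      rw [hM'app]
      dsimp only
      split_ifs with h1 h2 h3
      · rw [hNg0]
        have e : (1 - ((1 : I) : ℝ)) * (s : ℝ) + ((1 : I) : ℝ) * 0 = 0 := by norm_num
        rw [e, pj_zero]
        show c.toContinuousMap 0 = α 0
        rw [hc0, hz0]
      · have e : (1 - ((1 : I) : ℝ)) * (s : ℝ) + ((1 : I) : ℝ) * (4 * (s : ℝ) - 1) =
            4 * (s : ℝ) - 1 := by norm_num
        rw [e]
      · rw [hNd0]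
        have e : (1 - ((1 : I) : ℝ)) * (s : ℝ) + ((1 : I) : ℝ) * 1 = 1 := by norm_num
        rw [e, pj_one]
        show mu 0 = α 1
        rw [hmu0, hz1]
      · rw [hNg0]
        have e : (1 - ((1 : I) : ℝ)) * (s : ℝ) + ((1 : I) : ℝ) * 1 = 1 := by norm_num
        rw [e, pj_one]
        show f (c.toContinuousMap 0) = α 1
        rw [hc0, hz1]
    · -- M (1, s) = Z0.1.2 s = A (0, s)
      intro s
      rw [hMapp]
      show _ = A (0, s)
      rw [hAapp]
      dsimp only
      split_ifs
      · rw [hNg1]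
      · rw [hL0]
      · rw [hNd1]
      · rw [hNg1]
    · intro r
      rw [hMapp]
      dsimp only
      rw [if_pos (by norm_num : ((0 : I) : ℝ) ≤ 1 / 4)]
      have e : 4 * ((0 : I) : ℝ) = 0 := by norm_num
      rw [e, pj_zero, hNgl]
      exact hc0
    · intro r
      rw [hMapp]
      dsimp only
      rw [if_neg (by norm_num : ¬ ((1 : I) : ℝ) ≤ 1 / 4),
          if_neg (by norm_num : ¬ ((1 : I) : ℝ) ≤ 1 / 2),
          if_neg (by norm_num : ¬ ((1 : I) : ℝ) ≤ 3 / 4)]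
      have e : 4 - 4 * ((1 : I) : ℝ) = 0 := by norm_num
      rw [e, pj_zero, hNgl]
      show f (c.toContinuousMap 0) = f x
      rw [hc0]
    · intro r s
      rw [hMapp]
      dsimp only
      split_ifs
      · rw [hNgp]
        show p (c.toContinuousMap 0) = p x
        rw [hc0]
      · exact hzp _
      · rw [hNdp]
        show p (mu 0) = p x
        rw [hmu0, hf]
      · rw [hf, hNgp]
        show p (c.toContinuousMap 0) = p x
        rw [hc0]
  exact ((j3.trans hZjoin.symm).trans j2.symm).trans j1.symm


end RAux

theorem reidemeister_equiv_pi0 {E B : Type} [TopologicalSpace E] [TopologicalSpace B]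
    [CompactSpace E] [CompactSpace B] [PathConnectedSpace E] [PathConnectedSpace B]
    [T2Space E] [T2Space B] {dE dB : ℕ}
    [ChartedSpace (EuclideanSpace ℝ (Fin dE)) E]
    [ChartedSpace (EuclideanSpace ℝ (Fin dB)) B]
    (p : C(E, B)) (hp : IsHurewiczFibration p)
    (f : C(E, E)) (hf : ∀ x, p (f x) = p x)
    (x₀ : E) (ω : Path x₀ (f x₀)) (hω : ∀ t, p (ω t) = p x₀) :
    ∃ Γ : ReidemeisterSetB p f ω → Pi0 (EBSpace p f),
      Function.Bijective Γ ∧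
      ∀ (θ : FiberLoop p x₀) (z : EBSpace p f),
        z.1.1 = x₀ → (∀ s, z.1.2 s = (θ.1.trans ω) s) →
        Γ (rClass p f ω θ) = piComp z := by
  classical
  have hJE : ∀ (a b : FiberLoop p x₀), ReidemeisterRelB p f ω a b →
      piComp (RAux.ptOf p f ω hω a) = piComp (RAux.ptOf p f ω hω b) := fun a b h =>
    (RAux.piComp_eq_iff _ _).mpr (RAux.joined_of_rel hω a b h)
  refine ⟨Quot.lift (fun θ => piComp (RAux.ptOf p f ω hω θ)) hJE, ⟨?_, ?_⟩, ?_⟩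
  · -- injective
    intro q q'
    obtain ⟨θ, rfl⟩ := Quot.exists_rep q
    obtain ⟨θ', rfl⟩ := Quot.exists_rep q'
    intro h
    have hj : Joined (RAux.ptOf p f ω hω θ) (RAux.ptOf p f ω hω θ') :=
      (RAux.piComp_eq_iff _ _).mp h
    exact Quot.sound (RAux.rel_of_joined hω θ θ' hj)
  · -- surjective
    intro q
    obtain ⟨z, rfl⟩ := Quot.exists_rep q
    obtain ⟨θ, hθ⟩ := RAux.surj_step p hp f hf x₀ ω hω z
    exact ⟨Quot.mk _ θ, (RAux.piComp_eq_iff _ _).mpr hθ⟩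
  · -- compatibility
    intro θ z hz1 hz2
    have : z = RAux.ptOf p f ω hω θ := by
      refine Subtype.ext (Prod.ext hz1 (ContinuousMap.ext fun s => ?_))
      exact hz2 s
    rw [this]
    rfl
end

section
/- There is an injective map φ: 𝒩_B(f) → R_B(f; x₀, ω) defined by φ([x]) = Γ⁻¹(C_{(x,c_x)}), where x is a fixed point of f, c_x denotes the constant path at x, C_{(x,c_x)} is the path component of (x, c_x) in E_B(f), and Γ: R_B(f; x₀, ω) → π₀(E_B(f)) is the canonical bijection sending [θ] to the component of (x₀, θ∗ω). -/
open unitInterval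

variable {E B : Type} [TopologicalSpace E] [TopologicalSpace B]

private theorem NBcover {X Y : Type*} [TopologicalSpace X] [TopologicalSpace Y]
    {f : X → Y} {n : ℕ} (S : Fin n → Set X) (hcl : ∀ i, IsClosed (S i))
    (hcov : ∀ x, ∃ i, x ∈ S i) (hcont : ∀ i, ContinuousOn f (S i)) : Continuous f := by
  rw [continuous_iff_isClosed]
  intro C hC
  have h : f ⁻¹' C = ⋃ i, S i ∩ f ⁻¹' C := by
    ext x
    simp only [Set.mem_iUnion, Set.mem_inter_iff, Set.mem_preimage]
    exact ⟨fun h => (hcov x).imp fun i hi => ⟨hi, h⟩, fun ⟨i, _, h⟩ => h⟩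
  rw [h]
  exact isClosed_iUnion_of_finite fun i => (hcont i).preimage_isClosed_of_isClosed (hcl i) hC

noncomputable def NBpsiC : ℝ × ℝ → ℝ × ℝ := fun w =>
  if w.2 ≤ w.1 then
    if 1 ≤ w.1 + w.2 then (1 - w.1, (2 * w.1 - w.2 + 1) / 3)
    else if 3 * w.1 ≤ w.2 + 1 then (3 * w.1 - 2 * w.2, w.2)
    else if 3 * w.1 + w.2 ≤ 2 then (1 - w.2, 3 * w.1 - 1)
    else (3 - 3 * w.1 - 2 * w.2, 1 - w.2)
  else
    if 1 ≤ w.1 + w.2 then (1 - w.2, (w.1 + 1) / 3)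
    else (w.1, (2 * w.1 + w.2) / 3)

noncomputable def NBpsiI : ℝ × ℝ → ℝ × ℝ := fun w =>
  if 1 ≤ w.1 + w.2 then
    if w.2 ≤ w.1 then ((w.2 + 1) / 3, 1 - w.1) else ((2 * w.2 - w.1 + 1) / 3, 1 - w.2)
  else
    if w.2 ≤ w.1 then ((w.1 + 2 * w.2) / 3, w.2)
    else if 2 ≤ w.1 + 3 * w.2 then (1 - w.1, 3 - 2 * w.1 - 3 * w.2)
    else if w.1 + 1 ≤ 3 * w.2 then (3 * w.2 - 1, 1 - w.1)
    else (w.1, 3 * w.2 - 2 * w.1)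

theorem NBpsiC_continuous : Continuous NBpsiC := by
  refine NBcover (n := 6)
    ![{w : ℝ × ℝ | 3 * w.1 ≤ w.2 + 1} ∩ {w : ℝ × ℝ | w.2 ≤ w.1},
      {w : ℝ × ℝ | w.2 + 1 ≤ 3 * w.1} ∩ {w : ℝ × ℝ | 3 * w.1 + w.2 ≤ 2},
      {w : ℝ × ℝ | 2 ≤ 3 * w.1 + w.2} ∩ {w : ℝ × ℝ | w.1 + w.2 ≤ 1},
      {w : ℝ × ℝ | w.2 ≤ w.1} ∩ {w : ℝ × ℝ | 1 ≤ w.1 + w.2},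
      {w : ℝ × ℝ | w.1 ≤ w.2} ∩ {w : ℝ × ℝ | 1 ≤ w.1 + w.2},
      {w : ℝ × ℝ | w.1 ≤ w.2} ∩ {w : ℝ × ℝ | w.1 + w.2 ≤ 1}] ?_ ?_ ?_
  · intro i
    fin_cases i <;>
      exact IsClosed.inter (isClosed_le (by fun_prop) (by fun_prop))
        (isClosed_le (by fun_prop) (by fun_prop))
  · intro w
    rcases le_or_gt w.2 w.1 with h1 | h1
    · rcases le_or_gt 1 (w.1 + w.2) with h2 | h2
      · exact ⟨3, Set.mem_inter h1 h2⟩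
      · rcases le_or_gt (3 * w.1) (w.2 + 1) with h3 | h3
        · exact ⟨0, Set.mem_inter h3 h1⟩
        · rcases le_or_gt (3 * w.1 + w.2) 2 with h4 | h4
          · exact ⟨1, Set.mem_inter h3.le h4⟩
          · exact ⟨2, Set.mem_inter h4.le h2.le⟩
    · rcases le_or_gt 1 (w.1 + w.2) with h2 | h2
      · exact ⟨4, Set.mem_inter h1.le h2⟩
      · exact ⟨5, Set.mem_inter h1.le h2.le⟩
  · intro i
    fin_cases i <;>
    [ (refine ContinuousOn.congr (f := fun w : ℝ × ℝ => ((3 * w.1 - 2 * w.2, w.2) : ℝ × ℝ))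
        (by fun_prop) ?_);
      (refine ContinuousOn.congr (f := fun w : ℝ × ℝ => ((1 - w.2, 3 * w.1 - 1) : ℝ × ℝ))
        (by fun_prop) ?_);
      (refine ContinuousOn.congr (f := fun w : ℝ × ℝ => ((3 - 3 * w.1 - 2 * w.2, 1 - w.2) : ℝ × ℝ))
        (by fun_prop) ?_);
      (refine ContinuousOn.congr (f := fun w : ℝ × ℝ => ((1 - w.1, (2 * w.1 - w.2 + 1) / 3) : ℝ × ℝ))
        (by fun_prop) ?_);
      (refine ContinuousOn.congr (f := fun w : ℝ × ℝ => ((1 - w.2, (w.1 + 1) / 3) : ℝ × ℝ))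
        (by fun_prop) ?_);
      (refine ContinuousOn.congr (f := fun w : ℝ × ℝ => ((w.1, (2 * w.1 + w.2) / 3) : ℝ × ℝ))
        (by fun_prop) ?_)] <;>
    · rintro ⟨a, b⟩ ⟨hw1, hw2⟩
      simp only [Set.mem_setOf_eq] at hw1 hw2
      simp only [NBpsiC]
      split_ifs <;> simp only [Prod.mk.injEq, and_true, true_and] <;>
        first
          | exact ⟨by linarith, by linarith⟩
          | linarith

theorem NBpsiI_continuous : Continuous NBpsiI := by
  refine NBcover (n := 6)
    ![{w : ℝ × ℝ | w.2 ≤ w.1} ∩ {w : ℝ × ℝ | w.1 + w.2 ≤ 1},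
      {w : ℝ × ℝ | w.2 ≤ w.1} ∩ {w : ℝ × ℝ | 1 ≤ w.1 + w.2},
      {w : ℝ × ℝ | w.1 ≤ w.2} ∩ {w : ℝ × ℝ | 1 ≤ w.1 + w.2},
      {w : ℝ × ℝ | 2 ≤ w.1 + 3 * w.2} ∩ {w : ℝ × ℝ | w.1 + w.2 ≤ 1},
      {w : ℝ × ℝ | w.1 + 3 * w.2 ≤ 2} ∩ {w : ℝ × ℝ | w.1 + 1 ≤ 3 * w.2},
      {w : ℝ × ℝ | 3 * w.2 ≤ w.1 + 1} ∩ {w : ℝ × ℝ | w.1 ≤ w.2}] ?_ ?_ ?_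
  · intro i
    fin_cases i <;>
      exact IsClosed.inter (isClosed_le (by fun_prop) (by fun_prop))
        (isClosed_le (by fun_prop) (by fun_prop))
  · intro w
    rcases le_or_gt 1 (w.1 + w.2) with h1 | h1
    · rcases le_or_gt w.2 w.1 with h2 | h2
      · exact ⟨1, Set.mem_inter h2 h1⟩
      · exact ⟨2, Set.mem_inter h2.le h1⟩
    · rcases le_or_gt w.2 w.1 with h2 | h2
      · exact ⟨0, Set.mem_inter h2 h1.le⟩
      · rcases le_or_gt 2 (w.1 + 3 * w.2) with h3 | h3
        · exact ⟨3, Set.mem_inter h3 h1.le⟩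
        · rcases le_or_gt (w.1 + 1) (3 * w.2) with h4 | h4
          · exact ⟨4, Set.mem_inter h3.le h4⟩
          · exact ⟨5, Set.mem_inter h4.le h2.le⟩
  · intro i
    fin_cases i <;>
    [ (refine ContinuousOn.congr (f := fun w : ℝ × ℝ => (((w.1 + 2 * w.2) / 3, w.2) : ℝ × ℝ))
        (by fun_prop) ?_);
      (refine ContinuousOn.congr (f := fun w : ℝ × ℝ => (((w.2 + 1) / 3, 1 - w.1) : ℝ × ℝ))
        (by fun_prop) ?_);
      (refine ContinuousOn.congr (f := fun w : ℝ × ℝ => (((2 * w.2 - w.1 + 1) / 3, 1 - w.2) : ℝ × ℝ))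
        (by fun_prop) ?_);
      (refine ContinuousOn.congr (f := fun w : ℝ × ℝ => ((1 - w.1, 3 - 2 * w.1 - 3 * w.2) : ℝ × ℝ))
        (by fun_prop) ?_);
      (refine ContinuousOn.congr (f := fun w : ℝ × ℝ => ((3 * w.2 - 1, 1 - w.1) : ℝ × ℝ))
        (by fun_prop) ?_);
      (refine ContinuousOn.congr (f := fun w : ℝ × ℝ => ((w.1, 3 * w.2 - 2 * w.1) : ℝ × ℝ))
        (by fun_prop) ?_)] <;>
    · rintro ⟨a, b⟩ ⟨hw1, hw2⟩
      simp only [Set.mem_setOf_eq] at hw1 hw2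
      simp only [NBpsiI]
      split_ifs <;> simp only [Prod.mk.injEq, and_true, true_and] <;>
        first
          | exact ⟨by linarith, by linarith⟩
          | linarith

theorem NBpsiC_mem {a b : ℝ} (h0a : 0 ≤ a) (h1a : a ≤ 1) (h0b : 0 ≤ b) (h1b : b ≤ 1) :
    (0 ≤ (NBpsiC (a, b)).1 ∧ (NBpsiC (a, b)).1 ≤ 1) ∧
      (0 ≤ (NBpsiC (a, b)).2 ∧ (NBpsiC (a, b)).2 ≤ 1) := by
  simp only [NBpsiC]
  split_ifs <;> dsimp only <;>
    exact ⟨⟨by linarith, by linarith⟩, ⟨by linarith, by linarith⟩⟩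

theorem NBpsiI_mem {a b : ℝ} (h0a : 0 ≤ a) (h1a : a ≤ 1) (h0b : 0 ≤ b) (h1b : b ≤ 1) :
    (0 ≤ (NBpsiI (a, b)).1 ∧ (NBpsiI (a, b)).1 ≤ 1) ∧
      (0 ≤ (NBpsiI (a, b)).2 ∧ (NBpsiI (a, b)).2 ≤ 1) := by
  simp only [NBpsiI]
  split_ifs <;> dsimp only <;>
    exact ⟨⟨by linarith, by linarith⟩, ⟨by linarith, by linarith⟩⟩

theorem NBpsi_inv {c d : ℝ} (h0c : 0 ≤ c) (h1c : c ≤ 1) (h0d : 0 ≤ d) (h1d : d ≤ 1) :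
    NBpsiC (NBpsiI (c, d)) = (c, d) := by
  simp only [NBpsiI]
  split_ifs <;>
  · simp only [NBpsiC]
    split_ifs <;> simp only [Prod.mk.injEq, and_true, true_and] <;>
    first
      | exact ⟨by linarith, by linarith⟩
      | linarith

theorem NBpsiC_b0_1 {a : ℝ} (h0 : 0 ≤ a) (h : 3 * a ≤ 1) : NBpsiC (a, 0) = (3 * a, 0) := by
  simp only [NBpsiC]
  split_ifs <;> simp only [Prod.mk.injEq, and_true, true_and] <;>
    first
      | exact ⟨by linarith, by linarith⟩
      | linarith

theorem NBpsiC_b0_2 {a : ℝ} (h1 : 1 ≤ 3 * a) (h : 3 * a ≤ 2) : NBpsiC (a, 0) = (1, 3 * a - 1) := by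
  simp only [NBpsiC]
  split_ifs <;> simp only [Prod.mk.injEq, and_true, true_and] <;>
    first
      | exact ⟨by linarith, by linarith⟩
      | linarith

theorem NBpsiC_b0_3 {a : ℝ} (h : 2 ≤ 3 * a) (h' : a ≤ 1) : NBpsiC (a, 0) = (3 - 3 * a, 1) := by
  simp only [NBpsiC]
  split_ifs <;> simp only [Prod.mk.injEq, and_true, true_and] <;>
    first
      | exact ⟨by linarith, by linarith⟩
      | linarith

theorem NBpsiI_b0 {c : ℝ} (h0 : 0 ≤ c) (h1 : c ≤ 1) : NBpsiI (c, 0) = (c / 3, 0) := by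
  simp only [NBpsiI]
  split_ifs <;> simp only [Prod.mk.injEq, and_true, true_and] <;>
    first
      | exact ⟨by linarith, by linarith⟩
      | linarith

theorem NBpsiI_right {d : ℝ} (h0 : 0 ≤ d) (h1 : d ≤ 1) : NBpsiI (1, d) = ((d + 1) / 3, 0) := by
  simp only [NBpsiI]
  split_ifs <;> simp only [Prod.mk.injEq, and_true, true_and] <;>
    first
      | exact ⟨by linarith, by linarith⟩
      | linarith

theorem NBpsiI_top {c : ℝ} (h0 : 0 ≤ c) (h1 : c ≤ 1) : NBpsiI (c, 1) = ((3 - c) / 3, 0) := by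
  simp only [NBpsiI]
  split_ifs <;> simp only [Prod.mk.injEq, and_true, true_and] <;>
    first
      | exact ⟨by linarith, by linarith⟩
      | linarith


private theorem NBjoined_of_eqvGen {X : Type} [TopologicalSpace X] {z z' : X}
    (h : Relation.EqvGen (Joined (X := X)) z z') : Joined z z' := by
  induction h with
  | rel a b hab => exact hab
  | refl a => exact Joined.refl a
  | symm a b _ ih => exact ih.symm
  | trans a b c _ _ ih1 ih2 => exact ih1.trans ih2

private theorem NBjoined_EB (p : C(E, B)) (f : C(E, E)) (c : C(I, E)) (H : C(I × I, E))
    (hb : ∀ t, H (t, 0) = c t) (ht : ∀ t, H (t, 1) = f (c t))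
    (hfib : ∀ t s, p (H (t, s)) = p (c t))
    (z z' : EBSpace p f) (hz1 : z.1.1 = c 0) (hz2 : ∀ s, z.1.2 s = H (0, s))
    (hz1' : z'.1.1 = c 1) (hz2' : ∀ s, z'.1.2 s = H (1, s)) : Joined z z' := by
  refine ⟨⟨⟨fun t => ⟨(c t, H.curry t), fun s => hfib t s, hb t, ht t⟩, ?_⟩, ?_, ?_⟩⟩
  · exact Continuous.subtype_mk (c.continuous.prodMk H.curry.continuous) _
  · exact Subtype.ext (Prod.ext hz1.symm (ContinuousMap.ext fun s => (hz2 s).symm))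
  · exact Subtype.ext (Prod.ext hz1'.symm (ContinuousMap.ext fun s => (hz2' s).symm))

private theorem NBsquare_of_joined (p : C(E, B)) (f : C(E, E)) {z z' : EBSpace p f}
    (h : Joined z z') :
    ∃ (c : C(I, E)) (H : C(I × I, E)), c 0 = z.1.1 ∧ c 1 = z'.1.1 ∧
      (∀ s, H (0, s) = z.1.2 s) ∧ (∀ s, H (1, s) = z'.1.2 s) ∧
      (∀ t, H (t, 0) = c t) ∧ (∀ t, H (t, 1) = f (c t)) ∧
      (∀ t s, p (H (t, s)) = p (c t)) := by
  obtain ⟨P⟩ := h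
  have hPc : Continuous fun t : I => (P t).1 :=
    continuous_subtype_val.comp P.continuous
  refine ⟨⟨fun t => (P t).1.1, hPc.fst⟩,
    (ContinuousMap.mk (fun t => (P t).1.2) hPc.snd).uncurry, ?_, ?_, ?_, ?_, ?_, ?_, ?_⟩
  · show (P 0).1.1 = z.1.1; rw [P.source]
  · show (P 1).1.1 = z'.1.1; rw [P.target]
  · intro s; show (P 0).1.2 s = z.1.2 s; rw [P.source]
  · intro s; show (P 1).1.2 s = z'.1.2 s; rw [P.target]
  · intro t; exact (P t).2.2.1
  · intro t; exact (P t).2.2.2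
  · intro t s; exact (P t).2.1 s

private theorem NBcorrection (p : C(E, B)) (f : C(E, E)) {x₀ : E}
    (ω : Path x₀ (f x₀)) (hω : ∀ t, p (ω t) = p x₀)
    (η : Path x₀ (f x₀)) (hη : ∀ t, p (η t) = p x₀) :
    ∃ G : C(I × I, E),
      (∀ s, G (0, s) = ((η.trans ω.symm).trans ω) s) ∧ (∀ s, G (1, s) = η s) ∧
      (∀ u, G (u, 0) = x₀) ∧ (∀ u, G (u, 1) = f x₀) ∧ ∀ u s, p (G (u, s)) = p x₀ := by
  classical
  have h0I : ((0 : I) : ℝ) = 0 := rfl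
  have h1I : ((1 : I) : ℝ) = 1 := rfl
  have hcd : ∀ u : I, (0 : ℝ) < 1 + 3 * (u : ℝ) := fun u => by nlinarith [u.2.1]
  have hηe : ∀ r : ℝ, p (η.extend r) = p x₀ := fun r => hη _
  have hωe : ∀ r : ℝ, p (ω.extend r) = p x₀ := fun r => hω _
  have transEq : ∀ {x y z : E} (γ : Path x y) (γ' : Path y z) (t : I),
      (γ.trans γ') t = if (t : ℝ) ≤ 1 / 2 then γ.extend (2 * t) else γ'.extend (2 * t - 1) :=
    fun γ γ' t => rfl
  have symmEq : ∀ r : ℝ, r ∈ Set.Icc (0:ℝ) 1 → ω.symm.extend r = ω.extend (1 - r) := by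
    intro r hr
    rw [Path.extend_apply _ hr, Path.extend_apply _ ⟨by simp [hr.2], by simp [hr.1]⟩]
    rfl
  have hGc : Continuous fun z : I × I =>
      if (z.2 : ℝ) ≤ (1 + 3 * (z.1 : ℝ)) / 4
      then η.extend (4 * (z.2 : ℝ) / (1 + 3 * (z.1 : ℝ)))
      else ω.extend (max (2 + 3 * (z.1 : ℝ) - 4 * (z.2 : ℝ)) (2 * (z.2 : ℝ) - 1)) := by
    have hu : Continuous fun z : I × I => (z.1 : ℝ) := continuous_subtype_val.comp continuous_fst
    have hs : Continuous fun z : I × I => (z.2 : ℝ) := continuous_subtype_val.comp continuous_snd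
    refine Continuous.if_le ?_ ?_ hs (by fun_prop) ?_
    · exact η.continuous_extend.comp
        (Continuous.div (by fun_prop) (by fun_prop) fun z => (hcd z.1).ne')
    · exact ω.continuous_extend.comp (Continuous.max (by fun_prop) (by fun_prop))
    · intro z hz
      have h42 : 4 * (z.2 : ℝ) = 1 + 3 * (z.1 : ℝ) := by rw [hz]; ring
      have h4 : 4 * (z.2 : ℝ) / (1 + 3 * (z.1 : ℝ)) = 1 := by
        rw [h42]; exact div_self (hcd z.1).ne'
      have h5 : 2 + 3 * (z.1 : ℝ) - 4 * (z.2 : ℝ) = 1 := by rw [h42]; ring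
      have h6 : 2 * (z.2 : ℝ) - 1 ≤ 1 := by nlinarith [z.2.2.2]
      rw [h4, h5, max_eq_left h6, Path.extend_one, Path.extend_one]
  refine ⟨⟨_, hGc⟩, ?_, ?_, ?_, ?_, ?_⟩
  · -- G (0, s) = ((η.trans ω.symm).trans ω) s
    intro s
    have hs0 : (0:ℝ) ≤ (s : ℝ) := s.2.1
    have hs1 : (s : ℝ) ≤ 1 := s.2.2
    simp only [ContinuousMap.coe_mk, h0I]
    rw [transEq]
    by_cases h1 : (s : ℝ) ≤ 1 / 4
    · have hmem : 2 * (s:ℝ) ∈ Set.Icc (0:ℝ) 1 := ⟨by linarith, by linarith⟩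
      rw [if_pos (by linarith : (s:ℝ) ≤ (1 + 3 * (0:ℝ)) / 4),
        if_pos (by linarith : (s : ℝ) ≤ 1 / 2),
        Path.extend_apply _ hmem, transEq,
        if_pos (show ((⟨2 * (s:ℝ), hmem⟩ : I) : ℝ) ≤ 1/2 by
          show 2 * (s:ℝ) ≤ 1/2; linarith)]
      have harg : (2 : ℝ) * ((⟨2 * (s:ℝ), hmem⟩ : I) : ℝ) = 4 * (s:ℝ) / (1 + 3 * 0) := by
        show (2:ℝ) * (2 * (s:ℝ)) = 4 * (s:ℝ) / (1 + 3 * 0)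
        norm_num
        try ring
      rw [harg]
    · by_cases h2 : (s : ℝ) ≤ 1 / 2
      · have hmem : 2 * (s:ℝ) ∈ Set.Icc (0:ℝ) 1 := ⟨by linarith, by linarith⟩
        rw [if_neg (by rw [not_le]; linarith : ¬ (s:ℝ) ≤ (1 + 3 * (0:ℝ)) / 4),
          if_pos h2, Path.extend_apply _ hmem, transEq,
          if_neg (show ¬ ((⟨2 * (s:ℝ), hmem⟩ : I) : ℝ) ≤ 1/2 by
            show ¬ 2 * (s:ℝ) ≤ 1/2; rw [not_le]; linarith)]
        have harg : (2 : ℝ) * ((⟨2 * (s:ℝ), hmem⟩ : I) : ℝ) - 1 = 4 * (s:ℝ) - 1 := by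
          show (2:ℝ) * (2 * (s:ℝ)) - 1 = 4 * (s:ℝ) - 1
          ring
        rw [harg, symmEq _ ⟨by linarith, by linarith⟩,
          max_eq_left (by linarith : 2 * (s:ℝ) - 1 ≤ 2 + 3 * 0 - 4 * (s:ℝ))]
        congr 1
        ring
      · rw [if_neg (by rw [not_le]; linarith : ¬ (s:ℝ) ≤ (1 + 3 * (0:ℝ)) / 4),
          if_neg h2,
          max_eq_right (by linarith : 2 + 3 * 0 - 4 * (s:ℝ) ≤ 2 * (s:ℝ) - 1)]
  · -- G (1, s) = η s
    intro s
    simp only [ContinuousMap.coe_mk, h1I]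
    rw [if_pos (by linarith [s.2.2] : (s : ℝ) ≤ (1 + 3 * 1) / 4)]
    have harg : 4 * (s:ℝ) / (1 + 3 * 1) = (s : ℝ) := by norm_num
    rw [harg, Path.extend_extends']
  · -- G (u, 0) = x₀
    intro u
    simp only [ContinuousMap.coe_mk, h0I]
    rw [if_pos (by linarith [hcd u] : (0:ℝ) ≤ (1 + 3 * (u:ℝ)) / 4)]
    have harg : 4 * (0:ℝ) / (1 + 3 * (u:ℝ)) = 0 := by simp
    rw [harg, Path.extend_zero]
  · -- G (u, 1) = f x₀
    intro u
    simp only [ContinuousMap.coe_mk, h1I]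
    by_cases hc : (1:ℝ) ≤ (1 + 3 * (u:ℝ)) / 4
    · have hu1 : (u : ℝ) = 1 := le_antisymm u.2.2 (by linarith)
      rw [if_pos hc, hu1]
      have harg : 4 * (1:ℝ) / (1 + 3 * 1) = 1 := by norm_num
      rw [harg, Path.extend_one]
    · rw [if_neg hc]
      have harg : max (2 + 3 * (u:ℝ) - 4 * 1) (2 * (1:ℝ) - 1) = 1 := by
        rw [max_eq_right (by linarith [u.2.2])]
        norm_num
      rw [harg, Path.extend_one]
  · -- fiber
    intro u s
    simp only [ContinuousMap.coe_mk]
    split_ifs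
    · exact hηe _
    · exact hωe _


private theorem NBthreeSided (p : C(E, B)) (hp : IsHurewiczFibration p) (f : C(E, E))
    (hf : ∀ x, p (f x) = p x) {a b : E} (lam : Path a b) (α : Path b (f b))
    (hα : ∀ s, p (α s) = p b) :
    ∃ H : C(I × I, E), (∀ t, H (t, 0) = lam t) ∧ (∀ s, H (1, s) = α s) ∧
      (∀ t, H (t, 1) = f (lam t)) ∧ ∀ t s, p (H (t, s)) = p (lam t) := by
  classical
  have h0I : ((0 : I) : ℝ) = 0 := rfl
  have h1I : ((1 : I) : ℝ) = 1 := rfl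
  have hαe : ∀ r : ℝ, p (α.extend r) = p b := fun r => hα _
  -- the boundary data map
  have hUc : Continuous fun r : I =>
      if (r : ℝ) ≤ 1 / 3 then lam.extend (3 * r)
      else if (r : ℝ) ≤ 2 / 3 then α.extend (3 * r - 1)
      else f (lam.extend (3 - 3 * r)) := by
    have hrc : Continuous fun r : I => (r : ℝ) := continuous_subtype_val
    refine Continuous.if_le ?_ ?_ hrc continuous_const ?_
    · exact lam.continuous_extend.comp (by fun_prop)
    · refine Continuous.if_le ?_ ?_ hrc continuous_const ?_
      · exact α.continuous_extend.comp (by fun_prop)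
      · exact f.continuous.comp (lam.continuous_extend.comp (by fun_prop))
      · intro r hr
        rw [hr, show (3:ℝ) * (2/3) - 1 = 1 by norm_num, show (3:ℝ) - 3 * (2/3) = 1 by norm_num,
          Path.extend_one, Path.extend_one]
    · intro r hr
      rw [hr, if_pos (by norm_num : (1:ℝ)/3 ≤ 2/3),
        show (3:ℝ) * (1/3) - 1 = 0 by norm_num, show (3:ℝ) * (1/3) = 1 by norm_num,
        Path.extend_one, Path.extend_zero]
  set U : C(I, E) := ⟨_, hUc⟩ with hUdef
  have hUval : ∀ r : I, U r =
      if (r : ℝ) ≤ 1 / 3 then lam.extend (3 * r)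
      else if (r : ℝ) ≤ 2 / 3 then α.extend (3 * r - 1)
      else f (lam.extend (3 - 3 * r)) := fun r => rfl
  -- the base map
  have hbc : Continuous fun z : I × I => p (lam.extend ((NBpsiC ((z.1 : ℝ), (z.2 : ℝ))).1)) := by
    have hco : Continuous fun z : I × I => ((z.1 : ℝ), (z.2 : ℝ)) :=
      Continuous.prodMk (continuous_subtype_val.comp continuous_fst)
        (continuous_subtype_val.comp continuous_snd)
    exact p.continuous.comp (lam.continuous_extend.comp ((NBpsiC_continuous.comp hco).fst))
  have hcompat : ∀ r : I, (fun z : I × I => p (lam.extend ((NBpsiC ((z.1 : ℝ), (z.2 : ℝ))).1)))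
      (r, (0 : I)) = p (U r) := by
    intro r
    have hr0 : (0:ℝ) ≤ (r : ℝ) := r.2.1
    have hr1 : (r : ℝ) ≤ 1 := r.2.2
    show p (lam.extend ((NBpsiC ((r : ℝ), ((0:I) : ℝ))).1)) = p (U r)
    rw [hUval r, h0I]
    by_cases h1 : (r : ℝ) ≤ 1 / 3
    · rw [NBpsiC_b0_1 hr0 (by linarith), if_pos h1]
    · by_cases h2 : (r : ℝ) ≤ 2 / 3
      · rw [NBpsiC_b0_2 (by linarith) (by linarith), if_neg h1, if_pos h2]
        show p (lam.extend 1) = p (α.extend (3 * (r:ℝ) - 1))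
        rw [Path.extend_one, hαe]
      · rw [NBpsiC_b0_3 (by linarith) hr1, if_neg h1, if_neg h2]
        show p (lam.extend (3 - 3 * (r:ℝ))) = p (f (lam.extend (3 - 3 * (r:ℝ))))
        rw [hf]
  obtain ⟨K, hK0, hKp⟩ := hp I ⟨_, hbc⟩ U hcompat
  -- the reparametrizing map Φ
  have hmem : ∀ z : I × I, ((0:ℝ) ≤ (NBpsiI ((z.1 : ℝ), (z.2 : ℝ))).1 ∧
      (NBpsiI ((z.1 : ℝ), (z.2 : ℝ))).1 ≤ 1) ∧
      ((0:ℝ) ≤ (NBpsiI ((z.1 : ℝ), (z.2 : ℝ))).2 ∧ (NBpsiI ((z.1 : ℝ), (z.2 : ℝ))).2 ≤ 1) :=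
    fun z => NBpsiI_mem z.1.2.1 z.1.2.2 z.2.2.1 z.2.2.2
  have hco : Continuous fun z : I × I => ((z.1 : ℝ), (z.2 : ℝ)) :=
    Continuous.prodMk (continuous_subtype_val.comp continuous_fst)
      (continuous_subtype_val.comp continuous_snd)
  have hPhic : Continuous fun z : I × I =>
      (((⟨(NBpsiI ((z.1 : ℝ), (z.2 : ℝ))).1, (hmem z).1⟩ : I),
        (⟨(NBpsiI ((z.1 : ℝ), (z.2 : ℝ))).2, (hmem z).2⟩ : I)) : I × I) := by
    refine Continuous.prodMk (Continuous.subtype_mk ?_ _) (Continuous.subtype_mk ?_ _)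
    · exact (NBpsiI_continuous.comp hco).fst
    · exact (NBpsiI_continuous.comp hco).snd
  refine ⟨K.comp ⟨_, hPhic⟩, ?_, ?_, ?_, ?_⟩
  · -- bottom
    intro t
    show K (_, _) = lam t
    have hval : NBpsiI ((t : ℝ), ((0:I) : ℝ)) = ((t : ℝ) / 3, 0) := by
      rw [h0I]; exact NBpsiI_b0 t.2.1 t.2.2
    have hPhi : ((⟨(NBpsiI ((t : ℝ), ((0:I) : ℝ))).1, (hmem (t, 0)).1⟩ : I),
        (⟨(NBpsiI ((t : ℝ), ((0:I) : ℝ))).2, (hmem (t, 0)).2⟩ : I))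
        = ((⟨(t : ℝ) / 3, ⟨by linarith [t.2.1], by linarith [t.2.2]⟩⟩ : I), (0 : I)) := by
      refine Prod.ext (Subtype.ext ?_) (Subtype.ext ?_)
      · show (NBpsiI ((t : ℝ), ((0:I) : ℝ))).1 = (t : ℝ) / 3; rw [hval]
      · show (NBpsiI ((t : ℝ), ((0:I) : ℝ))).2 = ((0:I) : ℝ); rw [hval, h0I]
    rw [hPhi, hK0]
    rw [hUval]
    rw [if_pos (show ((⟨(t:ℝ)/3, ⟨by linarith [t.2.1], by linarith [t.2.2]⟩⟩ : I) : ℝ) ≤ 1/3 by dsimp only; linarith [t.2.2])]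
    show lam.extend (3 * ((t : ℝ) / 3)) = lam t
    rw [show 3 * ((t : ℝ) / 3) = (t : ℝ) by ring, Path.extend_extends']
  · -- right side
    intro s
    show K (_, _) = α s
    have hval : NBpsiI (((1:I) : ℝ), (s : ℝ)) = (((s : ℝ) + 1) / 3, 0) := by
      rw [h1I]; exact NBpsiI_right s.2.1 s.2.2
    have hPhi : ((⟨(NBpsiI (((1:I) : ℝ), (s : ℝ))).1, (hmem (1, s)).1⟩ : I),
        (⟨(NBpsiI (((1:I) : ℝ), (s : ℝ))).2, (hmem (1, s)).2⟩ : I))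
        = ((⟨((s : ℝ) + 1) / 3, ⟨by linarith [s.2.1], by linarith [s.2.2]⟩⟩ : I), (0 : I)) := by
      refine Prod.ext (Subtype.ext ?_) (Subtype.ext ?_)
      · show (NBpsiI (((1:I) : ℝ), (s : ℝ))).1 = ((s : ℝ) + 1) / 3; rw [hval]
      · show (NBpsiI (((1:I) : ℝ), (s : ℝ))).2 = ((0:I) : ℝ); rw [hval, h0I]
    rw [hPhi, hK0, hUval]
    by_cases hs0 : (s : ℝ) ≤ 0
    · have hs00 : (s : ℝ) = 0 := le_antisymm hs0 s.2.1
      have hseq : s = (0 : I) := Subtype.ext hs00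
      rw [if_pos (show ((⟨((s:ℝ)+1)/3, ⟨by linarith [s.2.1], by linarith [s.2.2]⟩⟩ : I) : ℝ) ≤ 1/3 by dsimp only; linarith)]
      show lam.extend (3 * (((s:ℝ) + 1) / 3)) = α s
      rw [show 3 * (((s:ℝ) + 1) / 3) = (s:ℝ) + 1 by ring, hs00, hseq]
      rw [show (0:ℝ) + 1 = 1 by norm_num, Path.extend_one]
      exact α.source.symm
    · rw [if_neg (show ¬ ((⟨((s:ℝ)+1)/3, ⟨by linarith [s.2.1], by linarith [s.2.2]⟩⟩ : I) : ℝ) ≤ 1/3 by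
        dsimp only; rw [not_le]; rw [not_le] at hs0; linarith)]
      rw [if_pos (show ((⟨((s:ℝ)+1)/3, ⟨by linarith [s.2.1], by linarith [s.2.2]⟩⟩ : I) : ℝ) ≤ 2/3 by dsimp only; linarith [s.2.2])]
      show α.extend (3 * (((s:ℝ) + 1) / 3) - 1) = α s
      rw [show 3 * (((s:ℝ) + 1) / 3) - 1 = (s:ℝ) by ring, Path.extend_extends']
  · -- top
    intro t
    show K (_, _) = f (lam t)
    have hval : NBpsiI ((t : ℝ), ((1:I) : ℝ)) = ((3 - (t : ℝ)) / 3, 0) := by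
      rw [h1I]; exact NBpsiI_top t.2.1 t.2.2
    have hPhi : ((⟨(NBpsiI ((t : ℝ), ((1:I) : ℝ))).1, (hmem (t, 1)).1⟩ : I),
        (⟨(NBpsiI ((t : ℝ), ((1:I) : ℝ))).2, (hmem (t, 1)).2⟩ : I))
        = ((⟨(3 - (t : ℝ)) / 3, ⟨by linarith [t.2.2], by linarith [t.2.1]⟩⟩ : I),
          (0 : I)) := by
      refine Prod.ext (Subtype.ext ?_) (Subtype.ext ?_)
      · show (NBpsiI ((t : ℝ), ((1:I) : ℝ))).1 = (3 - (t : ℝ)) / 3; rw [hval]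
      · show (NBpsiI ((t : ℝ), ((1:I) : ℝ))).2 = ((0:I) : ℝ); rw [hval, h0I]
    rw [hPhi, hK0, hUval]
    rw [if_neg (show ¬ ((⟨(3 - (t:ℝ))/3, ⟨by linarith [t.2.2], by linarith [t.2.1]⟩⟩ : I) : ℝ) ≤ 1/3 by
      dsimp only; rw [not_le]; linarith [t.2.2])]
    by_cases ht1 : 1 ≤ (t : ℝ)
    · have ht11 : (t : ℝ) = 1 := le_antisymm t.2.2 ht1
      have hteq : t = (1 : I) := Subtype.ext ht11
      rw [if_pos (show ((⟨(3 - (t:ℝ))/3, ⟨by linarith [t.2.2], by linarith [t.2.1]⟩⟩ : I) : ℝ) ≤ 2/3 by dsimp only; linarith)]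
      show α.extend (3 * ((3 - (t:ℝ)) / 3) - 1) = f (lam t)
      rw [ht11, hteq, show 3 * ((3 - (1:ℝ)) / 3) - 1 = 1 by norm_num, Path.extend_one]
      rw [show lam 1 = b from lam.target]
    · rw [if_neg (show ¬ ((⟨(3 - (t:ℝ))/3, ⟨by linarith [t.2.2], by linarith [t.2.1]⟩⟩ : I) : ℝ) ≤ 2/3 by
        dsimp only; rw [not_le]; rw [not_le] at ht1; linarith)]
      show f (lam.extend (3 - 3 * ((3 - (t:ℝ)) / 3))) = f (lam t)
      rw [show 3 - 3 * ((3 - (t:ℝ)) / 3) = (t:ℝ) by ring, Path.extend_extends']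
  · -- fiber
    intro t s
    show p (K (_, _)) = p (lam t)
    rw [hKp]
    show p (lam.extend ((NBpsiC ((NBpsiI ((t : ℝ), (s : ℝ))).1,
      (NBpsiI ((t : ℝ), (s : ℝ))).2)).1)) = p (lam t)
    rw [Prod.mk.eta, NBpsi_inv t.2.1 t.2.2 s.2.1 s.2.2]
    show p (lam.extend (t : ℝ)) = p (lam t)
    rw [Path.extend_extends']

theorem nielsen_to_reidemeister_injective {E B : Type} [TopologicalSpace E] [TopologicalSpace B]
    [CompactSpace E] [CompactSpace B] [PathConnectedSpace E] [PathConnectedSpace B]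
    [T2Space E] [T2Space B] {dE dB : ℕ}
    [ChartedSpace (EuclideanSpace ℝ (Fin dE)) E]
    [ChartedSpace (EuclideanSpace ℝ (Fin dB)) B]
    (p : C(E, B)) (hp : IsHurewiczFibration p)
    (f : C(E, E)) (hf : ∀ x, p (f x) = p x)
    (x₀ : E) (ω : Path x₀ (f x₀)) (hω : ∀ t, p (ω t) = p x₀) :
    ∃ Γ : ReidemeisterSetB p f ω → Pi0 (EBSpace p f),
      Function.Bijective Γ ∧
      (∀ (θ : FiberLoop p x₀) (z : EBSpace p f),
        z.1.1 = x₀ → (∀ s, z.1.2 s = (θ.1.trans ω) s) →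
        Γ (rClass p f ω θ) = piComp z) ∧
      ∃ φ : NielsenSetB p f → ReidemeisterSetB p f ω,
        Function.Injective φ ∧
        ∀ x : FixPt f, Γ (φ (nClass p x)) = piComp (gBMap p f x) := by
  classical
  -- canonical representative in `EBSpace`
  let mk : FiberLoop p x₀ → EBSpace p f := fun θ =>
    ⟨(x₀, (θ.1.trans ω).toContinuousMap), fun s => fiber_trans θ.2 hω s,
      (θ.1.trans ω).source, (θ.1.trans ω).target⟩
  have hsound : ∀ θ θ', ReidemeisterRelB p f ω θ θ' → piComp (mk θ) = piComp (mk θ') := by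
    rintro θ θ' ⟨c, Hsq, h1, h2, h3, h4, h5⟩
    exact Quot.sound (NBjoined_EB p f c.toContinuousMap Hsq h1 h3 h5 (mk θ) (mk θ')
      c.source.symm (fun s => (h2 s).symm) c.target.symm (fun s => (h4 s).symm))
  let Γ : ReidemeisterSetB p f ω → Pi0 (EBSpace p f) := Quot.lift (fun θ => piComp (mk θ)) hsound
  have joined_of_eq : ∀ {z z' : EBSpace p f}, piComp z = piComp z' → Joined z z' :=
    fun h => NBjoined_of_eqvGen (Quot.eq.mp h)
  have hinj : Function.Injective Γ := by
    intro q q' h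
    obtain ⟨θ, rfl⟩ := Quot.exists_rep q
    obtain ⟨θ', rfl⟩ := Quot.exists_rep q'
    obtain ⟨c, Hsq, hc0, hc1, hl, hr, hb, ht, hfib⟩ := NBsquare_of_joined p f (joined_of_eq h)
    exact Quot.sound ⟨⟨c, hc0, hc1⟩, Hsq, hb, (fun s => (hl s).trans rfl), ht,
      (fun s => (hr s).trans rfl), hfib⟩
  have hsurj : Function.Surjective Γ := by
    intro q
    obtain ⟨z, rfl⟩ := Quot.exists_rep q
    obtain ⟨lam⟩ : Joined x₀ z.1.1 := PathConnectedSpace.joined x₀ z.1.1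
    obtain ⟨Hsq, hbot, hright, htop, hfib⟩ :=
      NBthreeSided p hp f hf lam ⟨z.1.2, z.2.2.1, z.2.2.2⟩ (fun s => z.2.1 s)
    have hη0 : Hsq (0, 0) = x₀ := (hbot 0).trans lam.source
    have hη1 : Hsq (0, 1) = f x₀ := (htop 0).trans (congrArg f lam.source)
    have hηc : Continuous fun s : I => Hsq (0, s) :=
      Hsq.continuous.comp (Continuous.prodMk continuous_const continuous_id)
    let η : Path x₀ (f x₀) := ⟨⟨fun s => Hsq (0, s), hηc⟩, hη0, hη1⟩
    have hηf : ∀ s, p (η s) = p x₀ := fun s => (hfib 0 s).trans (congrArg p lam.source)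
    let θ : FiberLoop p x₀ := ⟨η.trans ω.symm, fiber_trans hηf (fiber_symm hω)⟩
    obtain ⟨G, hG0, hG1, hGb, hGt, hGf⟩ := NBcorrection p f ω hω η hηf
    refine ⟨Quot.mk _ θ, Quot.sound (Joined.trans (y := ⟨(x₀, η.toContinuousMap),
      fun s => hηf s, η.source, η.target⟩) ?_ ?_)⟩
    · exact NBjoined_EB p f (ContinuousMap.const I x₀) G hGb (fun u => (hGt u).trans rfl)
        (fun u s => (hGf u s).trans rfl) _ _ rfl (fun s => (hG0 s).symm) rfl
        (fun s => (hG1 s).symm)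
    · exact NBjoined_EB p f lam.toContinuousMap Hsq hbot htop hfib _ _ lam.source.symm
        (fun s => rfl) lam.target.symm (fun s => (hright s).symm)
  refine ⟨Γ, ⟨hinj, hsurj⟩, ?_, ?_⟩
  · intro θ z hz1 hz2
    show piComp (mk θ) = piComp z
    have hz : z = mk θ := Subtype.ext (Prod.ext hz1 (ContinuousMap.ext fun s => hz2 s))
    rw [hz]
  · -- construction of φ
    let Γe := Equiv.ofBijective Γ ⟨hinj, hsurj⟩
    have hφsound : ∀ x y, NielsenRelB p f x y →
        Γe.symm (piComp (gBMap p f x)) = Γe.symm (piComp (gBMap p f y)) := by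
      rintro x y ⟨lam, Hsq, hb, ht, hl, hr, hfib⟩
      exact congrArg Γe.symm (Quot.sound (NBjoined_EB p f lam.toContinuousMap Hsq hb ht hfib
        _ _ lam.source.symm (fun s => (hl s).symm) lam.target.symm (fun s => (hr s).symm)))
    refine ⟨Quot.lift (fun x => Γe.symm (piComp (gBMap p f x))) hφsound, ?_, ?_⟩
    · intro q q' h
      obtain ⟨x, rfl⟩ := Quot.exists_rep q
      obtain ⟨y, rfl⟩ := Quot.exists_rep q'
      have h2 : piComp (gBMap p f x) = piComp (gBMap p f y) := Γe.symm.injective h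
      obtain ⟨c, Hsq, hc0, hc1, hl, hr, hb, ht, hfib⟩ := NBsquare_of_joined p f (joined_of_eq h2)
      exact Quot.sound ⟨⟨c, hc0, hc1⟩, Hsq, hb, ht, (fun s => (hl s).trans rfl),
        (fun s => (hr s).trans rfl), hfib⟩
    · intro x
      show Γ (Γe.symm (piComp (gBMap p f x))) = piComp (gBMap p f x)
      exact Γe.apply_symm_apply _
end
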